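/- arXiv:2510.10291 — 10 statements merged into one kernel-verified Lean document; each statement's English description precedes it below -/
import Mathlib

section
/- In the Cayley graph of Z^d with the standard generating set S = {v : ||v||_1 = 1}, for all positive integers m and r, the triple (U, F, O) with U = [0,r-1]^{d-1} × [-3^{d-1}m, -1], F = [-r, 2r-1]^{d-1} × {0}, and O = [0,r-1]^{d-1} × [1, 3^{d-1}m] forms an (m, 3^{d-1}m + 1, 2r+4)-UFO. -/
open SimpleGraph Pointwise

/-- An `(m,k,r)`-UFO in a graph `G`: a triple `(U,F,O)` of disjoint finite vertex sets such that
`|U| ≥ m|F|`, there is a complete matching between `U` and `O` by paths of length at most `k`,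
and every path from `U` to `O` avoiding `F` has length at least `r`. -/
def IsUFO {V : Type*} (G : SimpleGraph V) (m k r : ℕ) (U F O : Set V) : Prop :=
  U.Nonempty ∧ U.Finite ∧ F.Finite ∧ O.Finite ∧
    Disjoint U F ∧ Disjoint U O ∧ Disjoint F O ∧
    m * F.ncard ≤ U.ncard ∧
    (∃ f : V → V, Set.BijOn f U O ∧ ∀ u ∈ U, G.Reachable u (f u) ∧ G.dist u (f u) ≤ k) ∧
    ∀ u ∈ U, ∀ o ∈ O, ∀ p : G.Walk u o, (∀ x ∈ p.support, x ∉ F) → r ≤ p.length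

/-- A graph is extraterrestrial if for all `m` there is `k` such that for all `r` it admits an
`(m,k,r)`-UFO. -/
def Extraterrestrial {V : Type*} (G : SimpleGraph V) : Prop :=
  ∀ m : ℕ, ∃ k : ℕ, ∀ r : ℕ, ∃ U F O : Set V, IsUFO G m k r U F O
/-- The canonical Cayley graph of `ℤ^d`, with generating set the standard basis vectors and
their negatives: two vertices are adjacent iff their `ℓ¹`-distance is `1`. -/
def zdGraph (d : ℕ) : SimpleGraph (Fin d → ℤ) where
  Adj x y := (∑ i, |x i - y i|) = 1
  symm := ⟨by intro x y h; simpa [abs_sub_comm] using h⟩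
  loopless := ⟨by intro x h; simp at h⟩

lemma zd_sum_le_length {d : ℕ} {a b : Fin d → ℤ} (p : (zdGraph d).Walk a b) :
    ∑ i, |a i - b i| ≤ (p.length : ℤ) := by
  induction p with
  | nil => simp
  | @cons a b c h q ih =>
    have h1 : ∑ i, |a i - c i| ≤ ∑ i, (|a i - b i| + |b i - c i|) :=
      Finset.sum_le_sum fun i _ => abs_sub_le _ _ _
    rw [Finset.sum_add_distrib] at h1
    have h2 : ∑ i, |a i - b i| = 1 := h
    simp only [SimpleGraph.Walk.length_cons]
    push_cast
    linarith

lemma zd_walk_shift {d : ℕ} (j : Fin d) (s : ℕ) : ∀ x : Fin d → ℤ,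
    ∃ p : (zdGraph d).Walk x (fun i => x i + if i = j then (s : ℤ) else 0), p.length = s := by
  induction s with
  | zero =>
    intro x
    have he : (fun i => x i + if i = j then ((0 : ℕ) : ℤ) else 0) = x := by
      funext i; split <;> simp
    rw [he]
    exact ⟨SimpleGraph.Walk.nil, rfl⟩
  | succ s ih =>
    intro x
    set x' : Fin d → ℤ := fun i => x i + if i = j then 1 else 0 with hx'
    have hadj : (zdGraph d).Adj x x' := by
      show (∑ i, |x i - x' i|) = 1
      have : ∀ i, |x i - x' i| = if i = j then 1 else 0 := by
        intro i; simp only [hx']; split <;> simp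
      simp only [this]
      simp
    obtain ⟨q, hq⟩ := ih x'
    have he : (fun i => x' i + if i = j then (s : ℤ) else 0)
        = fun i => x i + if i = j then ((s + 1 : ℕ) : ℤ) else 0 := by
      funext i; simp only [hx']; split <;> push_cast <;> ring
    exact ⟨SimpleGraph.Walk.cons hadj (q.copy rfl he), by simp [hq]⟩

lemma zd_cross {n : ℕ} {u o : Fin (n + 1) → ℤ} (p : (zdGraph (n + 1)).Walk u o) :
    u (Fin.last n) ≤ 0 → 0 < o (Fin.last n) → ∃ w ∈ p.support, w (Fin.last n) = 0 := by
  induction p with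
  | nil => intro h1 h2; omega
  | @cons a b c h q ih =>
    intro h1 h2
    by_cases h0 : a (Fin.last n) = 0
    · exact ⟨a, by simp, h0⟩
    · have hab : |a (Fin.last n) - b (Fin.last n)| ≤ 1 := by
        have hle : |a (Fin.last n) - b (Fin.last n)| ≤ ∑ i, |a i - b i| :=
          Finset.single_le_sum (f := fun i => |a i - b i|) (fun i _ => abs_nonneg _)
            (Finset.mem_univ (Fin.last n))
        have : (∑ i, |a i - b i|) = 1 := h
        omega
      have hb : b (Fin.last n) ≤ 0 := by
        rcases abs_le.mp hab with ⟨hl, hr⟩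
        omega
      obtain ⟨w, hw, hw0⟩ := ih hb h2
      exact ⟨w, by simp [hw], hw0⟩

lemma ncard_univ_pi {ι : Type*} [Fintype ι] {β : ι → Type*} (s : ∀ i, Set (β i)) :
    (Set.univ.pi s).ncard = ∏ i, (s i).ncard := by
  rw [← Nat.card_coe_set_eq, Nat.card_congr (Equiv.Set.univPi s), Nat.card_pi]
  simp [Nat.card_coe_set_eq]

lemma box_eq_pi {n : ℕ} (S T : Set ℤ) :
    {x : Fin (n + 1) → ℤ | (∀ i : Fin n, x i.castSucc ∈ S) ∧ x (Fin.last n) ∈ T}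
      = Set.univ.pi (Fin.snoc (fun _ : Fin n => S) T) := by
  ext x
  simp only [Set.mem_setOf_eq, Set.mem_pi, Set.mem_univ, forall_true_left]
  constructor
  · rintro ⟨h1, h2⟩ i
    induction i using Fin.lastCases with
    | last => simpa [Fin.snoc_last] using h2
    | cast i => simpa [Fin.snoc_castSucc] using h1 i
  · intro h
    refine ⟨fun i => ?_, ?_⟩
    · simpa [Fin.snoc_castSucc] using h i.castSucc
    · simpa [Fin.snoc_last] using h (Fin.last n)

lemma box_ncard {n : ℕ} (S T : Set ℤ) (hS : S.Finite) (hT : T.Finite) :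
    {x : Fin (n + 1) → ℤ | (∀ i : Fin n, x i.castSucc ∈ S) ∧ x (Fin.last n) ∈ T}.ncard
      = S.ncard ^ n * T.ncard := by
  rw [box_eq_pi, ncard_univ_pi, Fin.prod_univ_castSucc]
  simp [Fin.snoc_castSucc, Fin.snoc_last]

lemma box_finite {n : ℕ} (S T : Set ℤ) (hS : S.Finite) (hT : T.Finite) :
    {x : Fin (n + 1) → ℤ | (∀ i : Fin n, x i.castSucc ∈ S) ∧ x (Fin.last n) ∈ T}.Finite := by
  rw [box_eq_pi]
  apply Set.Finite.pi
  intro i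
  induction i using Fin.lastCases with
  | last => simpa [Fin.snoc_last] using hT
  | cast i => simpa [Fin.snoc_castSucc] using hS

lemma ncard_Ico (a b : ℤ) : (Set.Ico a b).ncard = (b - a).toNat := by
  rw [← Finset.coe_Ico, Set.ncard_coe_finset, Int.card_Ico]

lemma ncard_Icc (a b : ℤ) : (Set.Icc a b).ncard = (b + 1 - a).toNat := by
  rw [← Finset.coe_Icc, Set.ncard_coe_finset, Int.card_Icc]


/-- In the Cayley graph of `ℤ^d` (`d = n+1`) with the standard generators, for all positive
`m, r`, the triple `(U,F,O)` with `U = [0,r-1]^{d-1} × [-3^{d-1}m, -1]`,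
`F = [-r,2r-1]^{d-1} × {0}`, `O = [0,r-1]^{d-1} × [1, 3^{d-1}m]` is an
`(m, 3^{d-1}m + 1, 2r+4)`-UFO. -/
theorem stmt_0 (n m r : ℕ) (hm : 0 < m) (hr : 0 < r) :
    IsUFO (zdGraph (n + 1)) m (3 ^ n * m + 1) (2 * r + 4)
      {x | (∀ i : Fin n, x i.castSucc ∈ Set.Ico (0 : ℤ) (r : ℤ)) ∧
        x (Fin.last n) ∈ Set.Icc (-(3 ^ n * m : ℤ)) (-1 : ℤ)}
      {x | (∀ i : Fin n, x i.castSucc ∈ Set.Icc (-(r : ℤ)) (2 * (r : ℤ) - 1)) ∧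
        x (Fin.last n) = 0}
      {x | (∀ i : Fin n, x i.castSucc ∈ Set.Ico (0 : ℤ) (r : ℤ)) ∧
        x (Fin.last n) ∈ Set.Icc (1 : ℤ) ((3 : ℤ) ^ n * m)} := by
  obtain ⟨K, hKdef⟩ : ∃ K, 3 ^ n * m = K := ⟨_, rfl⟩
  have hK : ((3 : ℤ) ^ n * (m : ℤ)) = (K : ℤ) := by rw [← hKdef]; push_cast; ring
  have hKpos : 0 < K := by rw [← hKdef]; positivity
  rw [hKdef, hK]
  have hFeq : {x : Fin (n + 1) → ℤ |
      (∀ i : Fin n, x i.castSucc ∈ Set.Icc (-(r : ℤ)) (2 * (r : ℤ) - 1)) ∧ x (Fin.last n) = 0}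
      = {x : Fin (n + 1) → ℤ |
      (∀ i : Fin n, x i.castSucc ∈ Set.Icc (-(r : ℤ)) (2 * (r : ℤ) - 1)) ∧
        x (Fin.last n) ∈ ({0} : Set ℤ)} := by
    ext x; simp
  refine ⟨?_, ?_, ?_, ?_, ?_, ?_, ?_, ?_, ?_, ?_⟩
  · -- nonempty
    refine ⟨fun i => if i = Fin.last n then (-1 : ℤ) else 0, fun i => ?_, ?_⟩
    · simp only [Set.mem_Ico, if_neg (Fin.castSucc_lt_last i).ne]
      omega
    · simp only [Set.mem_Icc]
      simp only [if_pos, if_true]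
      constructor <;> omega
  · exact box_finite _ _ (Set.finite_Ico _ _) (Set.finite_Icc _ _)
  · rw [hFeq]; exact box_finite _ _ (Set.finite_Icc _ _) (Set.finite_singleton _)
  · exact box_finite _ _ (Set.finite_Ico _ _) (Set.finite_Icc _ _)
  · -- Disjoint U F
    rw [Set.disjoint_left]
    rintro x ⟨h1, h2⟩ ⟨h3, h4⟩
    have := (Set.mem_Icc.mp h2).2
    omega
  · -- Disjoint U O
    rw [Set.disjoint_left]
    rintro x ⟨h1, h2⟩ ⟨h3, h4⟩
    have := (Set.mem_Icc.mp h2).2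
    have := (Set.mem_Icc.mp h4).1
    omega
  · -- Disjoint F O
    rw [Set.disjoint_left]
    rintro x ⟨h1, h2⟩ ⟨h3, h4⟩
    have := (Set.mem_Icc.mp h4).1
    omega
  · -- cardinality
    rw [hFeq, box_ncard _ _ (Set.finite_Icc _ _) (Set.finite_singleton _),
      box_ncard _ _ (Set.finite_Ico _ _) (Set.finite_Icc _ _),
      ncard_Ico, ncard_Icc, ncard_Icc, Set.ncard_singleton]
    have e1 : ((r : ℤ) - 0).toNat = r := by omega
    have e2 : ((-1 : ℤ) + 1 - -((K : ℕ) : ℤ)).toNat = K := by omega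
    have e3 : ((2 * (r : ℤ) - 1) + 1 - -(r : ℤ)).toNat = 3 * r := by omega
    rw [e1, e2, e3, ← hKdef]
    exact le_of_eq (by ring)
  · -- matching
    refine ⟨fun x i => x i + if i = Fin.last n then ((K + 1 : ℕ) : ℤ) else 0, ⟨?_, ?_, ?_⟩, ?_⟩
    · -- MapsTo
      rintro x ⟨h1, h2⟩
      refine ⟨fun i => ?_, ?_⟩
      · simp only [if_neg (Fin.castSucc_lt_last i).ne, add_zero]
        exact h1 i
      · rcases Set.mem_Icc.mp h2 with ⟨ha, hb⟩
        simp only [Set.mem_Icc]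
        simp only [if_pos, if_true]
        push_cast
        omega
    · -- InjOn
      intro x _ y _ hxy
      funext i
      have := congrFun hxy i
      simpa using this
    · -- SurjOn
      rintro y ⟨h1, h2⟩
      refine ⟨fun i => y i - if i = Fin.last n then ((K + 1 : ℕ) : ℤ) else 0, ⟨fun i => ?_, ?_⟩, ?_⟩
      · simp only [if_neg (Fin.castSucc_lt_last i).ne, sub_zero]
        exact h1 i
      · rcases Set.mem_Icc.mp h2 with ⟨ha, hb⟩
        simp only [Set.mem_Icc]
        simp only [if_pos, if_true]
        push_cast
        omega
      · funext i
        simp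
    · -- reachability and distance
      intro u hu
      obtain ⟨p, hp⟩ := zd_walk_shift (Fin.last n) (K + 1) u
      exact ⟨⟨p⟩, le_trans (SimpleGraph.dist_le p) (le_of_eq hp)⟩
  · -- long path condition
    intro u hu o ho p hF
    obtain ⟨w, hw, hw0⟩ := zd_cross p (by have := (Set.mem_Icc.mp hu.2).2; omega) (by have := (Set.mem_Icc.mp ho.2).1; omega)
    have hnotF := hF w hw
    have hni : ¬ ∀ i : Fin n, w i.castSucc ∈ Set.Icc (-(r : ℤ)) (2 * (r : ℤ) - 1) :=
      fun h => hnotF ⟨h, hw0⟩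
    obtain ⟨i, hi⟩ := not_forall.mp hni
    rw [Set.mem_Icc, not_and_or, not_le, not_le] at hi
    -- split the walk at w
    have hlen : (p.takeUntil w hw).length + (p.dropUntil w hw).length = p.length := by
      conv_rhs => rw [← p.take_spec hw]
      rw [SimpleGraph.Walk.length_append]
    have hA := zd_sum_le_length (p.takeUntil w hw)
    have hB := zd_sum_le_length (p.dropUntil w hw)
    have hpair : ∀ a : Fin (n + 1) → ℤ,
        |a i.castSucc - w i.castSucc| + |a (Fin.last n) - w (Fin.last n)|
          ≤ ∑ j, |a j - w j| := by
      intro a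
      have hsub : ({i.castSucc, Fin.last n} : Finset (Fin (n + 1))) ⊆ Finset.univ :=
        Finset.subset_univ _
      have := Finset.sum_le_sum_of_subset_of_nonneg hsub
        (fun j _ _ => abs_nonneg (a j - w j))
      rwa [Finset.sum_pair (Fin.castSucc_lt_last i).ne] at this
    have hpair' : ∀ a : Fin (n + 1) → ℤ,
        |w i.castSucc - a i.castSucc| + |w (Fin.last n) - a (Fin.last n)|
          ≤ ∑ j, |w j - a j| := by
      intro a
      have hsub : ({i.castSucc, Fin.last n} : Finset (Fin (n + 1))) ⊆ Finset.univ :=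
        Finset.subset_univ _
      have := Finset.sum_le_sum_of_subset_of_nonneg hsub
        (fun j _ _ => abs_nonneg (w j - a j))
      rwa [Finset.sum_pair (Fin.castSucc_lt_last i).ne] at this
    have hui := hu.1 i
    have hoi := ho.1 i
    have hulast := hu.2
    have holast := ho.2
    rw [Set.mem_Ico] at hui hoi
    rw [Set.mem_Icc] at hulast holast
    have hu1 : ((r : ℤ) + 1) ≤ |u i.castSucc - w i.castSucc| := by
      rcases hi with h | h
      · have : (r : ℤ) + 1 ≤ u i.castSucc - w i.castSucc := by omega
        exact this.trans (le_abs_self _)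
      · have : (r : ℤ) + 1 ≤ -(u i.castSucc - w i.castSucc) := by omega
        exact this.trans (neg_le_abs _)
    have hu2 : (1 : ℤ) ≤ |u (Fin.last n) - w (Fin.last n)| := by
      have : (1 : ℤ) ≤ -(u (Fin.last n) - w (Fin.last n)) := by omega
      exact this.trans (neg_le_abs _)
    have ho1 : ((r : ℤ) + 1) ≤ |w i.castSucc - o i.castSucc| := by
      rcases hi with h | h
      · have : (r : ℤ) + 1 ≤ -(w i.castSucc - o i.castSucc) := by omega
        exact this.trans (neg_le_abs _)
      · have : (r : ℤ) + 1 ≤ w i.castSucc - o i.castSucc := by omega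
        exact this.trans (le_abs_self _)
    have ho2 : (1 : ℤ) ≤ |w (Fin.last n) - o (Fin.last n)| := by
      have : (1 : ℤ) ≤ -(w (Fin.last n) - o (Fin.last n)) := by omega
      exact this.trans (neg_le_abs _)
    have hfinal : (2 * (r : ℤ) + 4) ≤ (p.length : ℤ) := by
      have h1 := hpair u
      have h2 := hpair' o
      have : ((p.takeUntil w hw).length + (p.dropUntil w hw).length : ℤ) = (p.length : ℤ) := by
        exact_mod_cast hlen
      push_cast at this
      linarith
    exact_mod_cast hfinal
end

section
/- The canonical Cayley graph of Z^d (with generating set the standard basis vectors and their negatives) is extraterrestrial: for every m there exists k such that for every r there is an (m,k,r)-UFO. -/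
open SimpleGraph Pointwise

noncomputable def boxF (d r : ℕ) : Finset (Fin d → ℤ) :=
  Fintype.piFinset fun _ => Finset.Icc (-(r : ℤ)) r

lemma mem_boxF {r : ℕ} {x : Fin d → ℤ} : x ∈ boxF d r ↔ ∀ i, |x i| ≤ r := by
  simp [boxF, Fintype.mem_piFinset, abs_le]

lemma card_boxF (r : ℕ) : (boxF d r).card = (2 * r + 1) ^ d := by
  rw [boxF, Fintype.card_piFinset]
  simp [Int.card_Icc]
  congr 1
  omega

lemma boxF_mono {r s : ℕ} (h : r ≤ s) : boxF d r ⊆ boxF d s := by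
  intro x hx
  rw [mem_boxF] at hx ⊢
  intro i
  have := hx i
  have : (r : ℤ) ≤ s := by exact_mod_cast h
  omega

-- (a+2)^(e+1) ≤ a^(e+1) + 2*(e+1)*(a+2)^e
lemma pow_gap (a : ℕ) : ∀ e : ℕ, (a + 2) ^ (e + 1) ≤ a ^ (e + 1) + 2 * (e + 1) * (a + 2) ^ e := by
  intro e
  induction e with
  | zero => simp
  | succ e ih =>
    have h1 : (a + 2) ^ (e + 2) = (a + 2) ^ (e + 1) * (a + 2) := by ring
    have h2 : a ^ (e+1) * (a + 2) = a ^ (e + 2) + 2 * a ^ (e + 1) := by ring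
    have h3 : a ^ (e + 1) ≤ (a + 2) ^ (e + 1) := Nat.pow_le_pow_left (by omega) _
    calc (a + 2) ^ (e + 2) = (a + 2) ^ (e + 1) * (a + 2) := h1
      _ ≤ (a ^ (e + 1) + 2 * (e + 1) * (a + 2) ^ e) * (a + 2) := Nat.mul_le_mul_right _ ih
      _ = a ^ (e + 1) * (a + 2) + 2 * (e + 1) * (a + 2) ^ (e + 1) := by ring
      _ = a ^ (e + 2) + 2 * a ^ (e + 1) + 2 * (e + 1) * (a + 2) ^ (e + 1) := by rw [h2]
      _ ≤ a ^ (e + 2) + 2 * (a + 2) ^ (e + 1) + 2 * (e + 1) * (a + 2) ^ (e + 1) := by omega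
      _ = a ^ (e + 2) + 2 * (e + 2) * (a + 2) ^ (e + 1) := by ring

-- main counting: with n := (m+1)*d*2^d and A := 2n+1, m * ((A+2)^d - A^d) ≤ A^d
lemma count_main (m d : ℕ) (hd : 1 ≤ d) :
    let n := (m + 1) * d * 2 ^ d
    m * ((2 * (n + 1) + 1) ^ d - (2 * n + 1) ^ d) ≤ (2 * n + 1) ^ d := by
  intro n
  obtain ⟨e, rfl⟩ : ∃ e, d = e + 1 := ⟨d - 1, by omega⟩
  set A := 2 * n + 1 with hA
  have h1 : (A + 2) ^ (e + 1) - A ^ (e + 1) ≤ 2 * (e + 1) * (A + 2) ^ e := by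
    have := pow_gap A e; omega
  have hn1 : 1 ≤ n := by
    have : 1 ≤ 2 ^ (e + 1) := Nat.one_le_two_pow
    calc 1 ≤ (m + 1) * ((e+1) * 2 ^ (e+1)) := Nat.one_le_iff_ne_zero.mpr (by positivity)
      _ = n := by ring
  have h2 : A + 2 ≤ 2 * A := by omega
  have h3 : (A + 2) ^ e ≤ 2 ^ e * A ^ e := by
    calc (A + 2) ^ e ≤ (2 * A) ^ e := Nat.pow_le_pow_left h2 _
      _ = 2 ^ e * A ^ e := by rw [mul_pow]
  have h4 : m * (2 * (e + 1) * (2 ^ e * A ^ e)) ≤ A ^ (e + 1) := by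
    have hkey : m * (2 * (e + 1) * 2 ^ e) ≤ A := by
      have : m * ((e + 1) * 2 ^ (e + 1)) ≤ n := by
        calc m * ((e + 1) * 2 ^ (e + 1)) ≤ (m + 1) * ((e + 1) * 2 ^ (e + 1)) :=
              Nat.mul_le_mul_right _ (by omega)
          _ = n := by ring
      have h2e : m * (2 * (e + 1) * 2 ^ e) = m * ((e + 1) * 2 ^ (e + 1)) := by ring
      omega
    calc m * (2 * (e + 1) * (2 ^ e * A ^ e)) = (m * (2 * (e + 1) * 2 ^ e)) * A ^ e := by ring
      _ ≤ A * A ^ e := Nat.mul_le_mul_right _ hkey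
      _ = A ^ (e + 1) := by ring
  calc m * ((2 * (n + 1) + 1) ^ (e+1) - (2 * n + 1) ^ (e+1))
      = m * ((A + 2) ^ (e+1) - A ^ (e+1)) := by rw [hA]; ring_nf
    _ ≤ m * (2 * (e + 1) * (A + 2) ^ e) := Nat.mul_le_mul_left _ h1
    _ ≤ m * (2 * (e + 1) * (2 ^ e * A ^ e)) :=
        Nat.mul_le_mul_left _ (Nat.mul_le_mul_left _ h3)
    _ ≤ A ^ (e + 1) := h4

lemma zd_walk (d : ℕ) : ∀ N : ℕ, ∀ x y : Fin d → ℤ, (∑ i, |x i - y i|) = N →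
    ∃ p : (zdGraph d).Walk x y, p.length = N := by
  intro N
  induction N with
  | zero =>
    intro x y h
    have hz : (∑ i, |x i - y i|) = 0 := by exact_mod_cast h
    have hxy : x = y := by
      funext i
      have h0 : |x i - y i| = 0 :=
        (Finset.sum_eq_zero_iff_of_nonneg (fun j _ => abs_nonneg _)).mp hz i (Finset.mem_univ i)
      have := abs_eq_zero.mp h0
      linarith
    subst hxy
    exact ⟨Walk.nil, rfl⟩
  | succ N ih =>
    intro x y h
    have hne : ∃ i, x i ≠ y i := by
      by_contra hc
      push_neg at hc
      have : (∑ i, |x i - y i|) = 0 := Finset.sum_eq_zero (by intro j _; simp [hc j])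
      rw [this] at h
      simp at h
      omega
    obtain ⟨i, hi⟩ := hne
    set c : ℤ := if x i < y i then x i + 1 else x i - 1 with hc
    set x' : Fin d → ℤ := Function.update x i c with hx'
    have habs : |c - y i| = |x i - y i| - 1 := by
      rcases lt_or_gt_of_ne hi with h1 | h1
      · simp only [hc, if_pos h1]
        rw [abs_of_nonpos (by omega), abs_of_nonpos (by omega)]; ring
      · simp only [hc, if_neg (by omega : ¬ x i < y i)]
        rw [abs_of_nonneg (by omega), abs_of_nonneg (by omega)]; ring
    have hxc : |x i - c| = 1 := by
      rcases lt_or_gt_of_ne hi with h1 | h1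
      · have : x i - c = -1 := by simp only [hc, if_pos h1]; ring
        rw [this]; decide
      · have : x i - c = 1 := by simp only [hc, if_neg (by omega : ¬ x i < y i)]; ring
        rw [this]; decide
    have hadj : (zdGraph d).Adj x x' := by
      show (∑ j, |x j - x' j|) = 1
      rw [Finset.sum_eq_single i]
      · simpa only [hx', Function.update_self] using hxc
      · intro j _ hj
        simp [hx', Function.update_of_ne hj]
      · simp
    have hsum : (∑ j, |x' j - y j|) = N := by
      rw [← Finset.sum_erase_add _ _ (Finset.mem_univ i)]
      rw [← Finset.sum_erase_add _ (fun j => |x j - y j|) (Finset.mem_univ i)] at h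
      have he : (∑ j ∈ Finset.univ.erase i, |x' j - y j|)
          = ∑ j ∈ Finset.univ.erase i, |x j - y j| := by
        refine Finset.sum_congr rfl fun j hj => ?_
        rw [hx', Function.update_of_ne (Finset.ne_of_mem_erase hj)]
      rw [he, hx', Function.update_self, habs]
      push_cast at h ⊢
      have hpos : (1:ℤ) ≤ |x i - y i| := by
        have := abs_pos.mpr (sub_ne_zero.mpr hi); omega
      omega
    obtain ⟨q, hq⟩ := ih x' y hsum
    exact ⟨Walk.cons hadj q, by simp [hq]⟩

variable {d : ℕ}

noncomputable def Mnorm (hd : 1 ≤ d) (x : Fin d → ℤ) : ℤ :=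
  Finset.univ.sup' ⟨⟨0, hd⟩, Finset.mem_univ _⟩ (fun i => |x i|)

lemma le_Mnorm (hd : 1 ≤ d) (x : Fin d → ℤ) (i : Fin d) : |x i| ≤ Mnorm hd x :=
  Finset.le_sup' (fun j => |x j|) (Finset.mem_univ i)

lemma Mnorm_le (hd : 1 ≤ d) (x : Fin d → ℤ) (t : ℤ) (h : ∀ i, |x i| ≤ t) :
    Mnorm hd x ≤ t :=
  Finset.sup'_le _ _ fun i _ => h i

lemma exists_Mnorm (hd : 1 ≤ d) (x : Fin d → ℤ) : ∃ i, |x i| = Mnorm hd x := by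
  obtain ⟨i, _, hi⟩ := Finset.exists_mem_eq_sup' (⟨⟨0, hd⟩, Finset.mem_univ _⟩ :
      (Finset.univ : Finset (Fin d)).Nonempty) (fun i => |x i|)
  exact ⟨i, hi.symm⟩

lemma Mnorm_step (hd : 1 ≤ d) {x y : Fin d → ℤ} (h : (zdGraph d).Adj x y) :
    Mnorm hd y ≤ Mnorm hd x + 1 := by
  have hsum : (∑ i, |x i - y i|) = 1 := h
  apply Mnorm_le
  intro i
  have h1 : |x i - y i| ≤ 1 := by
    calc |x i - y i| ≤ ∑ j, |x j - y j| :=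
          Finset.single_le_sum (f := fun j => |x j - y j|) (fun j _ => abs_nonneg _) (Finset.mem_univ i)
      _ = 1 := hsum
  have h2 : |x i| ≤ Mnorm hd x := le_Mnorm hd x i
  have := abs_sub_abs_le_abs_sub (y i) (x i)
  rw [abs_sub_comm] at this
  omega

lemma Mnorm_ivt (hd : 1 ≤ d) : ∀ {x y : Fin d → ℤ} (p : (zdGraph d).Walk x y) (t : ℤ),
    Mnorm hd x ≤ t → t ≤ Mnorm hd y → ∃ z ∈ p.support, Mnorm hd z = t := by
  intro x y p
  induction p with
  | nil => intro t h1 h2; exact ⟨_, by simp, le_antisymm h1 h2⟩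
  | @cons a b c h q ih =>
    intro t h1 h2
    by_cases he : Mnorm hd a = t
    · exact ⟨_, by simp, he⟩
    · have hlt : Mnorm hd a < t := lt_of_le_of_ne h1 he
      have := Mnorm_step hd h
      obtain ⟨z, hz, hzt⟩ := ih t (by omega) h2
      exact ⟨z, by simp [hz], hzt⟩

/-- The canonical Cayley graph of `ℤ^d` is extraterrestrial. -/
theorem stmt_1 (d : ℕ) (hd : 1 ≤ d) : Extraterrestrial (zdGraph d) := by
  intro m
  set n : ℕ := (m + 1) * d * 2 ^ d with hn
  refine ⟨d * (2 * n + 3), fun r => ?_⟩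
  set v : Fin d → ℤ := fun _ => (2 * (n : ℤ) + 3) with hv
  refine ⟨↑(boxF d n), ↑(boxF d (n + 1) \ boxF d n), (fun x => x + v) '' ↑(boxF d n), ?_⟩
  have hUO : ∀ x ∈ (fun x => x + v) '' (↑(boxF d n) : Set (Fin d → ℤ)),
      ∀ i, (n : ℤ) + 3 ≤ x i ∧ x i ≤ 3 * n + 3 := by
    rintro x ⟨u, hu, rfl⟩ i
    have := (mem_boxF.mp hu) i
    simp only [hv, Pi.add_apply]
    rw [abs_le] at this
    constructor <;> omega
  have i0 : Fin d := ⟨0, hd⟩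
  refine ⟨⟨0, by simp only [Finset.mem_coe]; rw [mem_boxF]; intro i; simp⟩,
    (boxF d n).finite_toSet, (boxF d (n + 1) \ boxF d n).finite_toSet,
    ((boxF d n).finite_toSet).image _, ?_, ?_, ?_, ?_, ?_, ?_⟩
  · exact_mod_cast Finset.disjoint_sdiff
  · rw [Set.disjoint_left]
    intro x hx hxo
    have h1 := (mem_boxF.mp (by exact_mod_cast hx)) i0
    have h2 := (hUO x hxo i0).1
    rw [abs_le] at h1
    omega
  · rw [Set.disjoint_left]
    intro x hx hxo
    have hx' : x ∈ boxF d (n + 1) := (Finset.mem_sdiff.mp (by exact_mod_cast hx)).1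
    have h1 := (mem_boxF.mp hx') i0
    have h2 := (hUO x hxo i0).1
    rw [abs_le] at h1
    push_cast at h1
    omega
  · rw [Set.ncard_coe_finset, Set.ncard_coe_finset,
      Finset.card_sdiff_of_subset (boxF_mono (Nat.le_succ n)), card_boxF, card_boxF]
    have := count_main m d hd
    simpa using this
  · refine ⟨fun x => x + v, Set.InjOn.bijOn_image ((add_left_injective v).injOn), ?_⟩
    intro u hu
    have hsum : (∑ i, |u i - (u + v) i|) = (d * (2 * n + 3) : ℕ) := by
      have : ∀ i, |u i - (u + v) i| = 2 * (n : ℤ) + 3 := by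
        intro i
        simp only [hv, Pi.add_apply]
        rw [abs_of_nonpos (by omega)]
        ring
      rw [Finset.sum_congr rfl fun i _ => this i, Finset.sum_const]
      simp
    obtain ⟨p, hp⟩ := zd_walk d (d * (2 * n + 3)) u (u + v) hsum
    exact ⟨⟨p⟩, by rw [← hp]; exact SimpleGraph.dist_le p⟩
  · intro u hu o ho p hp
    exfalso
    have hMu : Mnorm hd u ≤ (n : ℤ) + 1 := by
      refine le_trans (Mnorm_le hd u n fun i => (mem_boxF.mp (by exact_mod_cast hu)) i) (by omega)
    have hMo : (n : ℤ) + 1 ≤ Mnorm hd o := by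
      have h2 := (hUO o ho i0).1
      have h3 : (n : ℤ) + 3 ≤ |o i0| := le_trans h2 (le_abs_self _)
      have h4 := le_Mnorm hd o i0
      omega
    obtain ⟨z, hz, hzt⟩ := Mnorm_ivt hd p ((n : ℤ) + 1) hMu hMo
    refine hp z hz ?_
    simp only [Finset.coe_sdiff, Set.mem_diff, Finset.mem_coe]
    constructor
    · rw [mem_boxF]
      intro i
      have := le_Mnorm hd z i
      push_cast
      omega
    · rw [mem_boxF]
      push_neg
      obtain ⟨i, hi⟩ := exists_Mnorm hd z
      exact ⟨i, by rw [hi, hzt]; omega⟩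
end

section
/- Every finitely generated infinite amenable group is extraterrestrial. Concretely: if Γ is an infinite group generated by a finite symmetric set S containing the identity, and for every m there is a finite set U ⊆ Γ with |US \ U| ≤ |U|/m, then for every m there exists k such that for every r, the Cayley graph Cay(Γ,S) admits an (m,k,r)-UFO. -/
open SimpleGraph Pointwise

/-- The Cayley graph of a group with respect to a (symmetric) set `S`. -/
def cayleyGraph (Γ : Type*) [Group Γ] (S : Set Γ) : SimpleGraph Γ where
  Adj g h := g ≠ h ∧ (g⁻¹ * h ∈ S ∨ h⁻¹ * g ∈ S)
  symm := ⟨by rintro g h ⟨hne, hs⟩; exact ⟨hne.symm, hs.symm⟩⟩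
  loopless := ⟨by rintro g ⟨hne, _⟩; exact hne rfl⟩

/-- Any walk in the Cayley graph from inside `U` to outside `U` meets the boundary `U*S \ U`. -/
lemma cayley_walk_hits_boundary {Γ : Type*} [Group Γ] (S : Finset Γ)
    (hsym : ∀ s ∈ S, s⁻¹ ∈ S) (U : Set Γ) {u o : Γ}
    (p : (cayleyGraph Γ (S : Set Γ)).Walk u o) (hu : u ∈ U) (ho : o ∉ U) :
    ∃ x ∈ p.support, x ∈ (U * (S : Set Γ)) \ U := by
  induction p with
  | nil => exact absurd hu ho
  | @cons a b c h q ih =>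
    by_cases hb : b ∈ U
    · obtain ⟨x, hx, hxF⟩ := ih hb ho
      exact ⟨x, by simp [SimpleGraph.Walk.support_cons, hx], hxF⟩
    · refine ⟨b, by simp [SimpleGraph.Walk.support_cons, q.start_mem_support], ?_, hb⟩
      obtain ⟨hne, hs | hs⟩ := h
      · have := Set.mul_mem_mul hu hs
        simpa [mul_inv_cancel_left] using this
      · have hs' : a⁻¹ * b ∈ S := by
          have := hsym _ hs
          simpa [mul_inv_rev] using this
        have := Set.mul_mem_mul hu hs'
        simpa [mul_inv_cancel_left] using this

/-- In a Cayley graph of a generating set containing `1`, right multiplication by any `t`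
is realized by walks of uniformly bounded length. -/
lemma cayley_walk_mul {Γ : Type*} [Group Γ] (S : Finset Γ) (hone : (1 : Γ) ∈ S)
    (hgen : Subgroup.closure (S : Set Γ) = ⊤) (t : Γ) :
    ∃ n : ℕ, ∀ u : Γ, ∃ p : (cayleyGraph Γ (S : Set Γ)).Walk u (u * t), p.length ≤ n := by
  have ht : t ∈ Subgroup.closure (S : Set Γ) := by rw [hgen]; exact Subgroup.mem_top t
  induction ht using Subgroup.closure_induction with
  | mem x hx =>
    by_cases hx1 : x = 1
    · subst hx1
      exact ⟨0, fun u => ⟨SimpleGraph.Walk.nil.copy rfl (mul_one u).symm, by simp⟩⟩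
    · refine ⟨1, fun u => ?_⟩
      have h : (cayleyGraph Γ (S : Set Γ)).Adj u (u * x) := by
        refine ⟨fun he => hx1 (mul_left_cancel (a := u) (by rw [mul_one]; exact he.symm)),
          Or.inl (by simpa [inv_mul_cancel_left] using hx)⟩
      exact ⟨SimpleGraph.Walk.cons h SimpleGraph.Walk.nil, by simp⟩
  | one => exact ⟨0, fun u => ⟨SimpleGraph.Walk.nil.copy rfl (mul_one u).symm, by simp⟩⟩
  | mul x y hx hy ihx ihy =>
    obtain ⟨n₁, h₁⟩ := ihx
    obtain ⟨n₂, h₂⟩ := ihy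
    refine ⟨n₁ + n₂, fun u => ?_⟩
    obtain ⟨p₁, hp₁⟩ := h₁ u
    obtain ⟨p₂, hp₂⟩ := h₂ (u * x)
    refine ⟨(p₁.append p₂).copy rfl (by rw [mul_assoc]), ?_⟩
    rw [SimpleGraph.Walk.length_copy, SimpleGraph.Walk.length_append]
    omega
  | inv x hx ihx =>
    obtain ⟨n, h⟩ := ihx
    refine ⟨n, fun u => ?_⟩
    obtain ⟨p, hp⟩ := h (u * x⁻¹)
    refine ⟨(p.copy rfl (by rw [inv_mul_cancel_right])).reverse, ?_⟩
    rw [SimpleGraph.Walk.length_reverse, SimpleGraph.Walk.length_copy]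
    exact hp

/-- Every finitely generated infinite amenable group is extraterrestrial. -/
theorem stmt_2 {Γ : Type*} [Group Γ] [Infinite Γ] (S : Finset Γ)
    (hsym : ∀ s ∈ S, s⁻¹ ∈ S) (hone : (1 : Γ) ∈ S)
    (hgen : Subgroup.closure (S : Set Γ) = ⊤)
    (hfolner : ∀ m : ℕ, 0 < m → ∃ U : Finset Γ, U.Nonempty ∧
      m * (((U : Set Γ) * (S : Set Γ)) \ (U : Set Γ)).ncard ≤ U.card) :
    Extraterrestrial (cayleyGraph Γ (S : Set Γ)) := by
  intro m
  obtain ⟨U, hUne, hUcard⟩ := hfolner (max m 1) (lt_of_lt_of_le one_pos (le_max_right m 1))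
  set G := cayleyGraph Γ (S : Set Γ) with hG
  set F : Set Γ := ((U : Set Γ) * (S : Set Γ)) \ (U : Set Γ) with hF
  have hUSfin : ((U : Set Γ) * (S : Set Γ)).Finite := U.finite_toSet.mul S.finite_toSet
  have hUsub : (U : Set Γ) ⊆ (U : Set Γ) * (S : Set Γ) := fun u hu => by
    have := Set.mul_mem_mul hu (show (1:Γ) ∈ (S:Set Γ) from hone)
    simpa using this
  -- pick t avoiding the finite set U⁻¹ * (U*S)
  have hAfin : ((U : Set Γ)⁻¹ * ((U : Set Γ) * (S : Set Γ))).Finite :=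
    (U.finite_toSet.inv).mul hUSfin
  obtain ⟨t, ht⟩ := hAfin.infinite_compl.nonempty
  have htx : ∀ u ∈ (U : Set Γ), u * t ∉ (U : Set Γ) * (S : Set Γ) := by
    intro u hu hmem
    apply ht
    have : u⁻¹ * (u * t) ∈ (U : Set Γ)⁻¹ * ((U : Set Γ) * (S : Set Γ)) :=
      Set.mul_mem_mul (Set.inv_mem_inv.mpr hu) hmem
    simpa [inv_mul_cancel_left] using this
  obtain ⟨k, hk⟩ := cayley_walk_mul S hone hgen t
  refine ⟨k, fun r => ⟨U, F, (· * t) '' U, ?_, U.finite_toSet, hUSfin.diff, (U.finite_toSet).image _, ?_, ?_, ?_, ?_, ?_, ?_⟩⟩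
  · obtain ⟨x, hx⟩ := hUne; exact ⟨x, hx⟩
  · exact Set.disjoint_left.mpr fun x hx hxF => hxF.2 hx
  · exact Set.disjoint_right.mpr (by rintro _ ⟨u, hu, rfl⟩ h; exact htx u hu (hUsub h))
  · exact Set.disjoint_right.mpr (by rintro _ ⟨u, hu, rfl⟩ h; exact htx u hu h.1)
  · calc m * F.ncard ≤ max m 1 * F.ncard := Nat.mul_le_mul_right _ (le_max_left m 1)
      _ ≤ U.card := hUcard
      _ = (U : Set Γ).ncard := (Set.ncard_coe_finset U).symm
  · refine ⟨(· * t), Set.InjOn.bijOn_image (fun a _ b _ h => mul_right_cancel h), fun u _ => ?_⟩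
    obtain ⟨p, hp⟩ := hk u
    exact ⟨⟨p⟩, le_trans (SimpleGraph.dist_le p) hp⟩
  · rintro u hu o ho p hav
    exfalso
    have hoU : o ∉ (U : Set Γ) := by
      rintro hoU
      obtain ⟨v, hv, rfl⟩ := ho
      exact htx v hv (hUsub hoU)
    obtain ⟨x, hx, hxF⟩ := cayley_walk_hits_boundary S hsym (U : Set Γ) p hu hoU
    exact hav x hx hxF
end

section
/- Every finitely generated multi-ended group is extraterrestrial: if Γ is generated by a finite symmetric set S and there is a finite set F ⊆ Γ such that Cay(Γ,S) has at least two infinite connected components after removing F, then Cay(Γ,S) is extraterrestrial. -/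
open SimpleGraph Pointwise

/-- A graph is multi-ended if removing some finite set of vertices leaves at least two
infinite connected components. -/
def MultiEnded {V : Type*} (G : SimpleGraph V) : Prop :=
  ∃ F₀ : Set V, F₀.Finite ∧ ∃ a b : ↥(F₀ᶜ),
    (G.induce F₀ᶜ).connectedComponentMk a ≠ (G.induce F₀ᶜ).connectedComponentMk b ∧
    ((G.induce F₀ᶜ).connectedComponentMk a).supp.Infinite ∧
    ((G.induce F₀ᶜ).connectedComponentMk b).supp.Infinite
def mulLeftHom {Γ : Type*} [Group Γ] (S : Set Γ) (c : Γ) :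
    cayleyGraph Γ S →g cayleyGraph Γ S where
  toFun g := c * g
  map_rel' := by
    rintro a b ⟨hne, hs⟩
    refine ⟨fun h => hne (mul_left_cancel h), ?_⟩
    simpa [mul_inv_rev, mul_assoc] using hs

@[simp] lemma mulLeftHom_apply {Γ : Type*} [Group Γ] (S : Set Γ) (c g : Γ) :
    mulLeftHom S c g = c * g := rfl

lemma cayley_reachable_mul {Γ : Type*} [Group Γ] {S : Set Γ} (c : Γ) {a b : Γ}
    (h : (cayleyGraph Γ S).Reachable a b) :
    (cayleyGraph Γ S).Reachable (c * a) (c * b) := by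
  simpa using h.map (mulLeftHom S c)

lemma cayley_reachable_one {Γ : Type*} [Group Γ] (S : Set Γ)
    (hgen : Subgroup.closure S = ⊤) (g : Γ) :
    (cayleyGraph Γ S).Reachable 1 g := by
  have hg : g ∈ Subgroup.closure S := hgen ▸ Subgroup.mem_top g
  induction hg using Subgroup.closure_induction with
  | mem x hx =>
      by_cases h1 : x = 1
      · subst h1; exact Reachable.refl 1
      · exact SimpleGraph.Adj.reachable ⟨fun h => h1 h.symm, .inl (by simpa using hx)⟩
  | one => exact Reachable.refl 1
  | mul x y hx hy ihx ihy =>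
      exact ihx.trans (by simpa using cayley_reachable_mul x ihy)
  | inv x hx ihx =>
      have : (cayleyGraph Γ S).Reachable x⁻¹ 1 := by
        simpa using cayley_reachable_mul x⁻¹ ihx
      exact this.symm

lemma cayley_reachable {Γ : Type*} [Group Γ] (S : Set Γ)
    (hgen : Subgroup.closure S = ⊤) (a b : Γ) :
    (cayleyGraph Γ S).Reachable a b :=
  (cayley_reachable_one S hgen a).symm.trans (cayley_reachable_one S hgen b)

lemma walk_in_induce {V : Type*} {G : SimpleGraph V} {s : Set V} :
    ∀ {u o : V} (p : G.Walk u o), (∀ x ∈ p.support, x ∈ s) →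
      ∀ (hu : u ∈ s) (ho : o ∈ s), (G.induce s).Reachable ⟨u, hu⟩ ⟨o, ho⟩ := by
  intro u o p
  induction p with
  | nil => intro _ hu ho; rfl
  | @cons u v o h p ih =>
      intro hsup hu ho
      have hv : v ∈ s := hsup v (by simp)
      have hadj : (G.induce s).Adj ⟨u, hu⟩ ⟨v, hv⟩ := h
      exact hadj.reachable.trans (ih (fun x hx => hsup x (by simp [hx])) hv ho)

/-- Every finitely generated multi-ended group is extraterrestrial. -/
theorem stmt_3 {Γ : Type*} [Group Γ] (S : Finset Γ)
    (hsym : ∀ s ∈ S, s⁻¹ ∈ S) (hgen : Subgroup.closure (S : Set Γ) = ⊤)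
    (hME : MultiEnded (cayleyGraph Γ (S : Set Γ))) :
    Extraterrestrial (cayleyGraph Γ (S : Set Γ)) := by
  classical
  obtain ⟨F₀, hF₀fin, a, b, hab, hInfA, hInfB⟩ := hME
  intro m
  set G := cayleyGraph Γ (S : Set Γ) with hG
  set n := m * F₀.ncard + 1 with hn
  have hinj : Function.Injective (Subtype.val : ↥(F₀ᶜ) → Γ) := Subtype.val_injective
  obtain ⟨A, hAsub, hAcard⟩ :=
    (hInfA.image hinj.injOn).exists_subset_card_eq n
  obtain ⟨B, hBsub, hBcard⟩ :=
    (hInfB.image hinj.injOn).exists_subset_card_eq n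
  let e : ↥A ≃ ↥B := Finset.equivOfCardEq (hAcard.trans hBcard.symm)
  let f : Γ → Γ := fun x => if h : x ∈ A then (e ⟨x, h⟩ : Γ) else x
  refine ⟨A.sup (fun u => G.dist u (f u)), fun r => ⟨↑A, F₀, ↑B, ?_⟩⟩
  -- membership facts
  have hAmem : ∀ x ∈ A, ∃ y : ↥(F₀ᶜ),
      (G.induce F₀ᶜ).connectedComponentMk y = (G.induce F₀ᶜ).connectedComponentMk a ∧
      (y : Γ) = x := by
    intro x hx
    obtain ⟨y, hy, hyx⟩ := hAsub hx
    exact ⟨y, (ConnectedComponent.mem_supp_iff _ _).mp hy, hyx⟩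
  have hBmem : ∀ x ∈ B, ∃ y : ↥(F₀ᶜ),
      (G.induce F₀ᶜ).connectedComponentMk y = (G.induce F₀ᶜ).connectedComponentMk b ∧
      (y : Γ) = x := by
    intro x hx
    obtain ⟨y, hy, hyx⟩ := hBsub hx
    exact ⟨y, (ConnectedComponent.mem_supp_iff _ _).mp hy, hyx⟩
  have hAc : ∀ x ∈ A, x ∈ F₀ᶜ := by
    intro x hx; obtain ⟨y, _, rfl⟩ := hAmem x hx; exact y.2
  have hBc : ∀ x ∈ B, x ∈ F₀ᶜ := by
    intro x hx; obtain ⟨y, _, rfl⟩ := hBmem x hx; exact y.2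
  refine ⟨?_, A.finite_toSet, hF₀fin, B.finite_toSet, ?_, ?_, ?_, ?_, ?_, ?_⟩
  · exact Finset.coe_nonempty.mpr (Finset.card_pos.mp (by omega))
  · rw [Set.disjoint_left]; intro x hx; exact hAc x hx
  · rw [Set.disjoint_left]
    intro x hxA hxB
    obtain ⟨y, hy, hyx⟩ := hAmem x hxA
    obtain ⟨z, hz, hzx⟩ := hBmem x hxB
    have : y = z := hinj (hyx.trans hzx.symm)
    exact hab (hy ▸ this ▸ hz)
  · rw [Set.disjoint_right]; intro x hx; exact hBc x hx
  · rw [Set.ncard_coe_finset, hAcard]; omega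
  · refine ⟨f, ⟨?_, ?_, ?_⟩, ?_⟩
    · intro x hx
      have hx' : x ∈ A := hx
      simp only [f, dif_pos hx']
      exact (e ⟨x, hx'⟩).2
    · intro x hx y hy hxy
      have hx' : x ∈ A := hx
      have hy' : y ∈ A := hy
      simp only [f, dif_pos hx', dif_pos hy'] at hxy
      have : (⟨x, hx'⟩ : ↥A) = ⟨y, hy'⟩ := e.injective (Subtype.ext hxy)
      exact congrArg Subtype.val this
    · intro y hy
      have hy' : y ∈ B := hy
      refine ⟨(e.symm ⟨y, hy'⟩ : Γ), (e.symm ⟨y, hy'⟩).2, ?_⟩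
      simp only [f, dif_pos (e.symm ⟨y, hy'⟩).2]
      simp
    · intro u hu
      exact ⟨cayley_reachable _ hgen _ _, Finset.le_sup (f := fun x => G.dist x (f x)) hu⟩
  · intro u hu o ho p hp
    exfalso
    obtain ⟨y, hy, rfl⟩ := hAmem u hu
    obtain ⟨z, hz, rfl⟩ := hBmem o ho
    have hreach : (G.induce F₀ᶜ).Reachable ⟨(y : Γ), y.2⟩ ⟨(z : Γ), z.2⟩ :=
      walk_in_induce p (fun x hx => hp x hx) y.2 z.2
    have : (G.induce F₀ᶜ).connectedComponentMk y = (G.induce F₀ᶜ).connectedComponentMk z :=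
      ConnectedComponent.sound hreach
    exact hab (hy ▸ this ▸ hz)
end

section
/- Being extraterrestrial is a quasi-isometry invariant for connected graphs of bounded degree: if G and G' are quasi-isometric graphs of bounded degree and G is extraterrestrial, then G' is extraterrestrial. -/
open SimpleGraph Pointwise

/-- Balls in a connected bounded-degree graph are finsets of size at most `(D+1)^t`. -/
lemma etAux_ball {V : Type*} (G : SimpleGraph V) (hconn : G.Connected) (D : ℕ)
    (hfin : ∀ v : V, (G.neighborSet v).Finite)
    (hdeg : ∀ v : V, (G.neighborSet v).ncard ≤ D) (x : V) (t : ℕ) :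
    ∃ s : Finset V, (∀ y, y ∈ s ↔ G.dist x y ≤ t) ∧ s.card ≤ (D + 1) ^ t := by
  classical
  induction t with
  | zero =>
    refine ⟨{x}, fun y => ?_, by simp⟩
    simp only [Finset.mem_singleton]
    constructor
    · rintro rfl; simp
    · intro h
      exact ((hconn x y).dist_eq_zero_iff.mp (Nat.le_zero.mp h)).symm
  | succ t ih =>
    obtain ⟨s, hs, hcard⟩ := ih
    refine ⟨s.biUnion (fun y => insert y (hfin y).toFinset), fun z => ?_, ?_⟩
    · simp only [Finset.mem_biUnion, Finset.mem_insert, Set.Finite.mem_toFinset, mem_neighborSet]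
      constructor
      · rintro ⟨y, hy, rfl | hadj⟩
        · exact le_trans ((hs _).mp hy) (Nat.le_succ t)
        · have h1 : G.dist y z = 1 := dist_eq_one_iff_adj.mpr hadj
          have h2 := hconn.dist_triangle (u := x) (v := y) (w := z)
          have := (hs _).mp hy
          omega
      · intro hz
        rcases Nat.lt_or_ge (G.dist x z) (t + 1) with h | h
        · exact ⟨z, (hs z).mpr (by omega), Or.inl rfl⟩
        · have hd : G.dist x z = t + 1 := le_antisymm hz h
          obtain ⟨p, hp⟩ := (hconn x z).exists_walk_length_eq_dist
          have hlen : p.reverse.length = t + 1 := by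
            rw [SimpleGraph.Walk.length_reverse, hp, hd]
          cases hrev : p.reverse with
          | nil => rw [hrev] at hlen; simp at hlen
          | @cons _ y _ hadj q =>
            rw [hrev] at hlen
            simp only [SimpleGraph.Walk.length_cons, Nat.succ_inj] at hlen
            refine ⟨y, (hs y).mpr ?_, Or.inr hadj.symm⟩
            have := SimpleGraph.dist_le q.reverse
            rw [SimpleGraph.Walk.length_reverse, hlen] at this
            exact this
    · calc (s.biUnion (fun y => insert y (hfin y).toFinset)).card
          ≤ s.card * (D + 1) := by
            apply Finset.card_biUnion_le_card_mul
            intro a _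
            calc (insert a (hfin a).toFinset).card ≤ (hfin a).toFinset.card + 1 :=
                  Finset.card_insert_le _ _
              _ ≤ D + 1 := by
                  have h1 : (hfin a).toFinset.card = (G.neighborSet a).ncard :=
                    (Set.ncard_eq_toFinset_card _ (hfin a)).symm
                  have h2 := hdeg a
                  omega
        _ ≤ (D + 1) ^ t * (D + 1) := Nat.mul_le_mul_right _ hcard
        _ = (D + 1) ^ (t + 1) := (pow_succ _ _).symm

/-- Greedy independent set in a bounded-degree conflict relation. -/
lemma etAux_greedy {α : Type*} [DecidableEq α] (R : α → α → Prop) [DecidableRel R]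
    (hsymm : ∀ a b, R a b → R b a) (L : ℕ) :
    ∀ S : Finset α, (∀ u ∈ S, (S.filter (fun v => R u v)).card ≤ L) →
      ∃ T : Finset α, T ⊆ S ∧ (∀ u ∈ T, ∀ v ∈ T, u ≠ v → ¬ R u v) ∧
        S.card ≤ (L + 1) * T.card := by
  classical
  intro S
  induction S using Finset.strongInduction with
  | _ S ih =>
    intro hS
    rcases S.eq_empty_or_nonempty with rfl | ⟨u, hu⟩
    · exact ⟨∅, by simp⟩
    · set Rem : Finset α := insert u (S.filter (fun v => R u v)) with hRem
      set S' : Finset α := S \ Rem with hS'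
      have hssub : S' ⊂ S := by
        refine Finset.ssubset_iff_of_subset (Finset.sdiff_subset) |>.mpr ?_
        exact ⟨u, hu, by simp [hS', hRem]⟩
      obtain ⟨T', hT'sub, hT'ind, hT'card⟩ := ih S' hssub (fun v hv => by
        refine le_trans (Finset.card_le_card ?_) (hS v (Finset.mem_sdiff.mp hv).1)
        exact Finset.filter_subset_filter _ (Finset.sdiff_subset))
      have huT' : u ∉ T' := fun h => by
        have := hT'sub h
        rw [hS', Finset.mem_sdiff] at this
        exact this.2 (by simp [hRem])
      refine ⟨insert u T', ?_, ?_, ?_⟩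
      · intro v hv
        rcases Finset.mem_insert.mp hv with rfl | hv
        · exact hu
        · exact Finset.sdiff_subset (hT'sub hv)
      · intro a ha b hb hab
        have key : ∀ v, v ∈ T' → ¬ R u v := by
          intro v hv hR
          have hmem := hT'sub hv
          rw [hS', Finset.mem_sdiff] at hmem
          exact hmem.2 (by simp [hRem, Finset.mem_filter, hmem.1, hR])
        rcases Finset.mem_insert.mp ha with ha' | ha'
        · rcases Finset.mem_insert.mp hb with hb' | hb'
          · exact absurd (ha'.trans hb'.symm) hab
          · subst ha'; exact key b hb'
        · rcases Finset.mem_insert.mp hb with hb' | hb'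
          · subst hb'; intro hR; exact key a ha' (hsymm _ _ hR)
          · exact hT'ind a ha' b hb' hab
      · have hRemcard : Rem.card ≤ L + 1 := by
          calc Rem.card ≤ (S.filter (fun v => R u v)).card + 1 := Finset.card_insert_le _ _
            _ ≤ L + 1 := by have := hS u hu; omega
        have hsplit : S.card ≤ S'.card + Rem.card := by
          have : S ⊆ S' ∪ Rem := by
            intro v hv
            rw [Finset.mem_union, hS', Finset.mem_sdiff]
            by_cases h : v ∈ Rem
            · exact Or.inr h
            · exact Or.inl ⟨hv, h⟩
          exact le_trans (Finset.card_le_card this) (Finset.card_union_le _ _)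
        rw [Finset.card_insert_of_notMem huT']
        calc S.card ≤ S'.card + Rem.card := hsplit
          _ ≤ (L + 1) * T'.card + (L + 1) := by omega
          _ = (L + 1) * (T'.card + 1) := by ring

/-- Being extraterrestrial is a quasi-isometry invariant for connected graphs of
bounded degree. -/
theorem stmt_4 {V V' : Type*} (G : SimpleGraph V) (G' : SimpleGraph V')
    (hconn : G.Connected) (hconn' : G'.Connected)
    (D D' : ℕ)
    (hfin : ∀ v : V, (G.neighborSet v).Finite) (hdeg : ∀ v : V, (G.neighborSet v).ncard ≤ D)
    (hfin' : ∀ v : V', (G'.neighborSet v).Finite)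
    (hdeg' : ∀ v : V', (G'.neighborSet v).ncard ≤ D')
    (f : V → V') (A B C : ℝ) (hA : 0 < A) (hB : 0 < B) (hC : 0 < C)
    (hqi : ∀ v₁ v₂ : V,
      (1 / A) * (G.dist v₁ v₂ : ℝ) - B ≤ (G'.dist (f v₁) (f v₂) : ℝ) ∧
      (G'.dist (f v₁) (f v₂) : ℝ) ≤ A * (G.dist v₁ v₂ : ℝ) + B)
    (hdense : ∀ v' : V', ∃ v : V, (G'.dist v' (f v) : ℝ) ≤ C)
    (hET : Extraterrestrial G) : Extraterrestrial G' := by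
  classical
  intro m'
  -- integer constants
  set a : ℕ := ⌈A⌉₊ with ha_def
  set b : ℕ := ⌈B⌉₊ with hb_def
  set c : ℕ := ⌈C⌉₊ with hc_def
  have ha1 : 1 ≤ a := Nat.one_le_iff_ne_zero.mpr (by
    simp only [ha_def, ne_eq, Nat.ceil_eq_zero, not_le]; exact hA)
  -- quasi-isometry bounds with natural constants
  have key1 : ∀ u v : V, G'.dist (f u) (f v) ≤ a * G.dist u v + b := by
    intro u v
    have h := (hqi u v).2
    have haA : A ≤ (a : ℝ) := Nat.le_ceil A
    have hbB : B ≤ (b : ℝ) := Nat.le_ceil B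
    have hd : (0:ℝ) ≤ (G.dist u v : ℝ) := Nat.cast_nonneg _
    have h5 : (G'.dist (f u) (f v) : ℝ) ≤ ((a * G.dist u v + b : ℕ) : ℝ) := by
      push_cast; nlinarith
    exact_mod_cast h5
  have key2 : ∀ u v : V, G.dist u v ≤ a * G'.dist (f u) (f v) + a * b := by
    intro u v
    have h := (hqi u v).1
    have h1 : (1 / A) * (G.dist u v : ℝ) ≤ (G'.dist (f u) (f v) : ℝ) + B := by linarith
    have h2 : (G.dist u v : ℝ) ≤ A * ((G'.dist (f u) (f v) : ℝ) + B) := by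
      have := mul_le_mul_of_nonneg_left h1 hA.le
      rw [← mul_assoc, mul_one_div_cancel hA.ne', one_mul] at this
      exact this
    have haA : A ≤ (a : ℝ) := Nat.le_ceil A
    have hbB : B ≤ (b : ℝ) := Nat.le_ceil B
    have hd' : (0:ℝ) ≤ (G'.dist (f u) (f v) : ℝ) := Nat.cast_nonneg _
    have h3 : (G.dist u v : ℝ) ≤ ((a * G'.dist (f u) (f v) + a * b : ℕ) : ℝ) := by
      push_cast; nlinarith
    exact_mod_cast h3
  have key3 : ∀ y' : V', ∃ x : V, G'.dist y' (f x) ≤ c := by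
    intro y'
    obtain ⟨x, hx⟩ := hdense y'
    exact ⟨x, by exact_mod_cast hx.trans (Nat.le_ceil C)⟩
  -- balls
  choose BG hBG1 hBG2 using fun (x : V) (t : ℕ) => etAux_ball G hconn D hfin hdeg x t
  choose BG' hBG'1 hBG'2 using fun (x : V') (t : ℕ) => etAux_ball G' hconn' D' hfin' hdeg' x t
  set Mab : ℕ := (D + 1) ^ (a * b) with hMab
  -- fiber bound
  have fiber : ∀ (w' : V') (S : Finset V) (h : V → V), Set.InjOn h ↑S →
      (∀ u ∈ S, f (h u) = w') → S.card ≤ Mab := by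
    intro w' S h hinj hall
    rcases S.eq_empty_or_nonempty with rfl | ⟨u₀, hu₀⟩
    · simp
    · refine le_trans (Finset.card_le_card_of_injOn h ?_ hinj) (hBG2 (h u₀) (a * b))
      intro u hu
      rw [Finset.mem_coe, hBG1]
      have h0 : G'.dist (f (h u₀)) (f (h u)) = 0 := by
        rw [hall u hu, hall u₀ hu₀, SimpleGraph.dist_self]
      have := key2 (h u₀) (h u)
      rw [h0, Nat.mul_zero, Nat.zero_add] at this
      exact this
  -- more constants
  set sC : ℕ := a * (2 * c + 1) + a * b with hsC
  set ρ : ℕ := a * sC + b + c with hρ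
  set T0 : ℕ := a * ρ + a * b with hT0
  set MT : ℕ := (D + 1) ^ T0 with hMT
  set M' : ℕ := (D' + 1) ^ ρ with hM'
  set L : ℕ := 4 * Mab with hL
  set m : ℕ := m' * M' * (L + 1) + 2 * MT + 1 with hm
  obtain ⟨k0, hk0⟩ := hET m
  refine ⟨a * k0 + b, ?_⟩
  intro r'
  set rr : ℕ := sC * (r' + 1) + k0 + 1 with hrr
  obtain ⟨U, F, O, hUFO⟩ := hk0 rr
  obtain ⟨hUne, hUfin, hFfin, hOfin, hUF, hUO, hFO, hcard, ⟨g, hgbij, hgk⟩, hlong⟩ := hUFO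
  have hsC1 : a * b + 1 ≤ sC := by
    rw [hsC]
    have : 1 ≤ a * (2 * c + 1) := Nat.one_le_iff_ne_zero.mpr (by positivity)
    omega
  have habT0 : a * b ≤ T0 := by rw [hT0]; omega
  have hk0rr : k0 < rr := by
    rw [hrr]; omega
  -- every matched pair is close to F
  have hit : ∀ u ∈ U, (∃ x ∈ F, G.dist u x ≤ k0) ∧ (∃ x ∈ F, G.dist (g u) x ≤ k0) := by
    intro u hu
    obtain ⟨hreach, hdist⟩ := hgk u hu
    obtain ⟨p, hp⟩ := hreach.exists_walk_length_eq_dist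
    have hplen : p.length ≤ k0 := by rw [hp]; exact hdist
    by_cases hF : ∀ x ∈ p.support, x ∉ F
    · exfalso
      have := hlong u hu (g u) (hgbij.mapsTo hu) p hF
      omega
    · push_neg at hF
      obtain ⟨x, hxp, hxF⟩ := hF
      refine ⟨⟨x, hxF, ?_⟩, ⟨x, hxF, ?_⟩⟩
      · exact le_trans (le_trans (SimpleGraph.dist_le (p.takeUntil x hxp))
          (SimpleGraph.Walk.length_takeUntil_le p hxp)) hplen
      · rw [SimpleGraph.dist_comm]
        exact le_trans (le_trans (SimpleGraph.dist_le (p.dropUntil x hxp))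
          (SimpleGraph.Walk.length_dropUntil_le p hxp)) hplen
  have hFne : F.Nonempty := by
    obtain ⟨u, hu⟩ := hUne
    obtain ⟨⟨x, hxF, _⟩, _⟩ := hit u hu
    exact ⟨x, hxF⟩
  set SU : Finset V := hUfin.toFinset with hSU
  set SF : Finset V := hFfin.toFinset with hSF
  have hSUcard : SU.card = U.ncard := (Set.ncard_eq_toFinset_card _ hUfin).symm
  have hSFcard : SF.card = F.ncard := (Set.ncard_eq_toFinset_card _ hFfin).symm
  have hSF1 : 1 ≤ SF.card := Finset.card_pos.mpr (by
    rw [hSF]; exact (Set.Finite.toFinset_nonempty _).mpr hFne)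
  set S1 : Finset V := SU.filter
    (fun u => (∀ x ∈ F, T0 < G.dist u x) ∧ (∀ x ∈ F, T0 < G.dist (g u) x)) with hS1
  -- counting the bad vertices
  set bad1 : Finset V := SU.filter (fun u => ∃ x ∈ F, G.dist u x ≤ T0) with hbad1def
  set bad2 : Finset V := SU.filter (fun u => ∃ x ∈ F, G.dist (g u) x ≤ T0) with hbad2def
  have hSUmemU : ∀ u ∈ SU, u ∈ U := by intro u hu; rwa [hSU, Set.Finite.mem_toFinset] at hu
  have hsplit : SU.card ≤ S1.card + bad1.card + bad2.card := by
    have hsub : SU ⊆ S1 ∪ bad1 ∪ bad2 := by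
      intro u hu
      simp only [Finset.mem_union, hS1, hbad1def, hbad2def, Finset.mem_filter]
      by_cases h1 : ∃ x ∈ F, G.dist u x ≤ T0
      · exact Or.inl (Or.inr ⟨hu, h1⟩)
      · by_cases h2 : ∃ x ∈ F, G.dist (g u) x ≤ T0
        · exact Or.inr ⟨hu, h2⟩
        · push_neg at h1 h2
          exact Or.inl (Or.inl ⟨hu, fun x hx => h1 x hx, fun x hx => h2 x hx⟩)
    calc SU.card ≤ (S1 ∪ bad1 ∪ bad2).card := Finset.card_le_card hsub
      _ ≤ (S1 ∪ bad1).card + bad2.card := Finset.card_union_le _ _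
      _ ≤ S1.card + bad1.card + bad2.card := by
          have := Finset.card_union_le S1 bad1; omega
  have hbig : ∀ u : V, (∃ x ∈ F, G.dist u x ≤ T0) → u ∈ SF.biUnion (fun x => BG x T0) := by
    intro u ⟨x, hxF, hd⟩
    rw [Finset.mem_biUnion]
    exact ⟨x, by rw [hSF, Set.Finite.mem_toFinset]; exact hxF,
      by rw [hBG1, SimpleGraph.dist_comm]; exact hd⟩
  have hbigcard : (SF.biUnion (fun x => BG x T0)).card ≤ SF.card * MT :=
    Finset.card_biUnion_le_card_mul _ _ _ (fun x _ => hBG2 x T0)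
  have hbad1 : bad1.card ≤ SF.card * MT := by
    refine le_trans (Finset.card_le_card ?_) hbigcard
    intro u hu
    rw [hbad1def, Finset.mem_filter] at hu
    exact hbig u hu.2
  have hbad2 : bad2.card ≤ SF.card * MT := by
    refine le_trans (Finset.card_le_card_of_injOn g ?_ ?_) hbigcard
    · intro u hu
      rw [Finset.mem_coe, hbad2def, Finset.mem_filter] at hu
      exact hbig (g u) hu.2
    · refine hgbij.injOn.mono ?_
      intro u hu
      rw [Finset.mem_coe, hbad2def, Finset.mem_filter] at hu
      exact Set.mem_of_mem_of_subset (hSUmemU u hu.1) (le_refl U)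
  -- greedy independent set under the conflict relation
  set R : V → V → Prop := fun u v =>
    f u = f v ∨ f (g u) = f (g v) ∨ f u = f (g v) ∨ f v = f (g u) with hR
  have hRsymm : ∀ u v, R u v → R v u := by
    intro u v h
    rcases h with h | h | h | h
    · exact Or.inl h.symm
    · exact Or.inr (Or.inl h.symm)
    · exact Or.inr (Or.inr (Or.inr h))
    · exact Or.inr (Or.inr (Or.inl h))
  have hS1U : ∀ u ∈ S1, u ∈ U := by
    intro u hu
    rw [hS1, Finset.mem_filter] at hu
    exact hSUmemU u hu.1
  have hdegS1 : ∀ u ∈ S1, (S1.filter (fun v => R u v)).card ≤ L := by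
    intro u _
    have hsub : S1.filter (fun v => R u v) ⊆
        (S1.filter (fun v => f v = f u)) ∪ (S1.filter (fun v => f (g v) = f (g u))) ∪
        (S1.filter (fun v => f v = f (g u))) ∪ (S1.filter (fun v => f (g v) = f u)) := by
      intro v hv
      rw [Finset.mem_filter] at hv
      obtain ⟨hv1, hv2⟩ := hv
      simp only [Finset.mem_union, Finset.mem_filter]
      rcases hv2 with h | h | h | h
      · exact Or.inl (Or.inl (Or.inl ⟨hv1, h.symm⟩))
      · exact Or.inl (Or.inl (Or.inr ⟨hv1, h.symm⟩))
      · exact Or.inr ⟨hv1, h.symm⟩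
      · exact Or.inl (Or.inr ⟨hv1, h⟩)
    have hinjg : ∀ T : Finset V, T ⊆ S1 → Set.InjOn g ↑T := by
      intro T hT
      refine hgbij.injOn.mono ?_
      intro v hv
      exact hS1U v (hT (Finset.mem_coe.mp hv))
    have c1 : (S1.filter (fun v => f v = f u)).card ≤ Mab :=
      fiber (f u) _ id (Set.injOn_id _) (fun v hv => (Finset.mem_filter.mp hv).2)
    have c2 : (S1.filter (fun v => f (g v) = f (g u))).card ≤ Mab :=
      fiber (f (g u)) _ g (hinjg _ (Finset.filter_subset _ _))
        (fun v hv => (Finset.mem_filter.mp hv).2)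
    have c3 : (S1.filter (fun v => f v = f (g u))).card ≤ Mab :=
      fiber (f (g u)) _ id (Set.injOn_id _) (fun v hv => (Finset.mem_filter.mp hv).2)
    have c4 : (S1.filter (fun v => f (g v) = f u)).card ≤ Mab :=
      fiber (f u) _ g (hinjg _ (Finset.filter_subset _ _))
        (fun v hv => (Finset.mem_filter.mp hv).2)
    calc (S1.filter (fun v => R u v)).card
        ≤ ((S1.filter (fun v => f v = f u)) ∪ (S1.filter (fun v => f (g v) = f (g u))) ∪
          (S1.filter (fun v => f v = f (g u))) ∪ (S1.filter (fun v => f (g v) = f u))).card :=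
          Finset.card_le_card hsub
      _ ≤ L := by
          have e1 := Finset.card_union_le ((S1.filter (fun v => f v = f u)) ∪
            (S1.filter (fun v => f (g v) = f (g u))) ∪ (S1.filter (fun v => f v = f (g u))))
            (S1.filter (fun v => f (g v) = f u))
          have e2 := Finset.card_union_le ((S1.filter (fun v => f v = f u)) ∪
            (S1.filter (fun v => f (g v) = f (g u)))) (S1.filter (fun v => f v = f (g u)))
          have e3 := Finset.card_union_le (S1.filter (fun v => f v = f u))
            (S1.filter (fun v => f (g v) = f (g u)))
          rw [hL]; omega
  obtain ⟨S0, hS0sub, hS0ind, hS0card⟩ := etAux_greedy R hRsymm L S1 hdegS1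
  have hS0U : ∀ u ∈ S0, u ∈ U := fun u hu => hS1U u (hS0sub hu)
  have hS0far1 : ∀ u ∈ S0, ∀ x ∈ F, T0 < G.dist u x := by
    intro u hu
    have := hS0sub hu
    rw [hS1, Finset.mem_filter] at this
    exact this.2.1
  have hS0far2 : ∀ u ∈ S0, ∀ x ∈ F, T0 < G.dist (g u) x := by
    intro u hu
    have := hS0sub hu
    rw [hS1, Finset.mem_filter] at this
    exact this.2.2
  -- no collision between f(u) and f(g u)
  have selfneq : ∀ u ∈ S0, f u ≠ f (g u) := by
    intro u hu heq
    have hd0 : G'.dist (f u) (f (g u)) = 0 := by rw [heq, SimpleGraph.dist_self]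
    have hd : G.dist u (g u) ≤ a * b := by
      have := key2 u (g u); rw [hd0, Nat.mul_zero, Nat.zero_add] at this; exact this
    obtain ⟨p, hp⟩ := (hgk u (hS0U u hu)).1.exists_walk_length_eq_dist
    have hplen : p.length ≤ a * b := by rw [hp]; exact hd
    by_cases hF : ∀ x ∈ p.support, x ∉ F
    · have := hlong u (hS0U u hu) (g u) (hgbij.mapsTo (hS0U u hu)) p hF
      have hmul : sC ≤ sC * (r' + 1) := Nat.le_mul_of_pos_right _ (by omega)
      omega
    · push_neg at hF
      obtain ⟨x, hxp, hxF⟩ := hF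
      have hdx : G.dist u x ≤ a * b :=
        le_trans (le_trans (SimpleGraph.dist_le (p.takeUntil x hxp))
          (SimpleGraph.Walk.length_takeUntil_le p hxp)) hplen
      have := hS0far1 u hu x hxF
      omega
  have crossneq : ∀ u ∈ S0, ∀ v ∈ S0, f u ≠ f (g v) := by
    intro u hu v hv heq
    by_cases huv : u = v
    · exact selfneq u hu (huv ▸ heq)
    · exact hS0ind u hu v hv huv (Or.inr (Or.inr (Or.inl heq)))
  have injf : Set.InjOn f ↑S0 := by
    intro u hu v hv heq
    by_contra huv
    exact hS0ind u (Finset.mem_coe.mp hu) v (Finset.mem_coe.mp hv) huv (Or.inl heq)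
  have injfg : Set.InjOn (fun u => f (g u)) ↑S0 := by
    intro u hu v hv heq
    by_contra huv
    exact hS0ind u (Finset.mem_coe.mp hu) v (Finset.mem_coe.mp hv) huv (Or.inr (Or.inl heq))
  -- counting
  have c1 : m * SF.card ≤ SU.card := by rw [hSUcard, hSFcard]; exact hcard
  have key5 : m' * M' * SF.card < S0.card := by
    have e0 : m * SF.card = (L + 1) * (m' * M' * SF.card) + 2 * (SF.card * MT) + SF.card := by
      rw [hm]; ring
    have e2 : (L + 1) * (m' * M' * SF.card) + SF.card ≤ (L + 1) * S0.card := by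
      linarith [c1, hsplit, hbad1, hbad2, hS0card, e0]
    have e3 : (L + 1) * (m' * M' * SF.card) < (L + 1) * S0.card := by linarith
    exact Nat.lt_of_mul_lt_mul_left e3
  have hS0pos : 0 < S0.card := Nat.lt_of_le_of_lt (Nat.zero_le _) key5
  -- the UFO in G'
  set U' : Set V' := ↑(S0.image f) with hU'def
  set O' : Set V' := ↑(S0.image (fun u => f (g u))) with hO'def
  set FB : Finset V' := SF.biUnion (fun x => BG' (f x) ρ) with hFBdef
  set F' : Set V' := ↑FB with hF'def
  have hF'mem : ∀ y, y ∈ F' ↔ ∃ x ∈ F, G'.dist (f x) y ≤ ρ := by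
    intro y
    rw [hF'def, Finset.mem_coe, hFBdef, Finset.mem_biUnion]
    constructor
    · rintro ⟨x, hx, hy⟩
      exact ⟨x, by rwa [hSF, Set.Finite.mem_toFinset] at hx, (hBG'1 _ _ _).mp hy⟩
    · rintro ⟨x, hx, hy⟩
      exact ⟨x, by rwa [hSF, Set.Finite.mem_toFinset], (hBG'1 _ _ _).mpr hy⟩
  have hU'card : U'.ncard = S0.card := by
    rw [hU'def, Set.ncard_coe_finset, Finset.card_image_of_injOn injf]
  have hF'card : F'.ncard ≤ SF.card * M' := by
    rw [hF'def, Set.ncard_coe_finset, hFBdef]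
    exact Finset.card_biUnion_le_card_mul _ _ _ (fun x _ => hBG'2 _ _)
  -- disjointness
  have hd1 : Disjoint U' F' := by
    rw [Set.disjoint_left]
    intro y hyU hyF
    obtain ⟨u, huS0, rfl⟩ := Finset.mem_image.mp (Finset.mem_coe.mp hyU)
    obtain ⟨x, hxF, hdx⟩ := (hF'mem _).mp hyF
    have h2 : G.dist x u ≤ T0 := by
      calc G.dist x u ≤ a * G'.dist (f x) (f u) + a * b := key2 x u
        _ ≤ a * ρ + a * b := by gcongr
        _ = T0 := hT0.symm
    have h3 := hS0far1 u huS0 x hxF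
    rw [SimpleGraph.dist_comm] at h3
    omega
  have hd2 : Disjoint U' O' := by
    rw [Set.disjoint_left]
    intro y hyU hyO
    obtain ⟨u, huS0, rfl⟩ := Finset.mem_image.mp (Finset.mem_coe.mp hyU)
    obtain ⟨w, hwS0, hweq⟩ := Finset.mem_image.mp (Finset.mem_coe.mp hyO)
    exact crossneq u huS0 w hwS0 hweq.symm
  have hd3 : Disjoint F' O' := by
    rw [Set.disjoint_left]
    intro y hyF hyO
    obtain ⟨u, huS0, hueq⟩ := Finset.mem_image.mp (Finset.mem_coe.mp hyO)
    obtain ⟨x, hxF, hdx⟩ := (hF'mem _).mp hyF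
    rw [← hueq] at hdx
    have h2 : G.dist x (g u) ≤ T0 := by
      calc G.dist x (g u) ≤ a * G'.dist (f x) (f (g u)) + a * b := key2 x (g u)
        _ ≤ a * ρ + a * b := by gcongr
        _ = T0 := hT0.symm
    have h3 := hS0far2 u huS0 x hxF
    rw [SimpleGraph.dist_comm] at h3
    omega
  -- cardinality condition
  have hcnt : m' * F'.ncard ≤ U'.ncard := by
    calc m' * F'.ncard ≤ m' * (SF.card * M') := Nat.mul_le_mul_left _ hF'card
      _ = m' * M' * SF.card := by ring
      _ ≤ S0.card := le_of_lt key5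
      _ = U'.ncard := hU'card.symm
  -- the matching
  set φ : V' → V' := fun y =>
    if h : ∃ w, w ∈ S0 ∧ f w = y then f (g (Classical.choose h)) else y with hφ
  have hφeq : ∀ u ∈ S0, φ (f u) = f (g u) := by
    intro u hu
    have hex : ∃ w, w ∈ S0 ∧ f w = f u := ⟨u, hu, rfl⟩
    have h1 : φ (f u) = f (g (Classical.choose hex)) := by rw [hφ]; exact dif_pos hex
    obtain ⟨hw1, hw2⟩ := Classical.choose_spec hex
    rw [h1, injf (Finset.mem_coe.mpr hw1) (Finset.mem_coe.mpr hu) hw2]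
  have hmap : Set.MapsTo φ U' O' := by
    intro y hy
    obtain ⟨u, huS0, rfl⟩ := Finset.mem_image.mp (Finset.mem_coe.mp hy)
    rw [hφeq u huS0]
    exact Finset.mem_coe.mpr (Finset.mem_image.mpr ⟨u, huS0, rfl⟩)
  have hinjφ : Set.InjOn φ U' := by
    intro y1 h1 y2 h2 he
    obtain ⟨u1, hu1, rfl⟩ := Finset.mem_image.mp (Finset.mem_coe.mp h1)
    obtain ⟨u2, hu2, rfl⟩ := Finset.mem_image.mp (Finset.mem_coe.mp h2)
    rw [hφeq u1 hu1, hφeq u2 hu2] at he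
    rw [injfg (Finset.mem_coe.mpr hu1) (Finset.mem_coe.mpr hu2) he]
  have hsurj : Set.SurjOn φ U' O' := by
    intro y hy
    obtain ⟨u, huS0, hueq⟩ := Finset.mem_image.mp (Finset.mem_coe.mp hy)
    exact ⟨f u, Finset.mem_coe.mpr (Finset.mem_image.mpr ⟨u, huS0, rfl⟩),
      by rw [hφeq u huS0]; exact hueq⟩
  have hmatch : ∀ y ∈ U', G'.Reachable y (φ y) ∧ G'.dist y (φ y) ≤ a * k0 + b := by
    intro y hy
    obtain ⟨u, huS0, rfl⟩ := Finset.mem_image.mp (Finset.mem_coe.mp hy)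
    rw [hφeq u huS0]
    refine ⟨hconn' _ _, ?_⟩
    calc G'.dist (f u) (f (g u)) ≤ a * G.dist u (g u) + b := key1 _ _
      _ ≤ a * k0 + b := by
          have := (hgk u (hS0U u huS0)).2
          gcongr
  -- the long path condition
  have hpaths : ∀ y1 ∈ U', ∀ y2 ∈ O', ∀ p' : G'.Walk y1 y2,
      (∀ x ∈ p'.support, x ∉ F') → r' ≤ p'.length := by
    intro y1 hy1 y2 hy2 p' havoid
    obtain ⟨u, huS0, rfl⟩ := Finset.mem_image.mp (Finset.mem_coe.mp hy1)
    obtain ⟨u₂, hu₂S0, hy2eq⟩ := Finset.mem_image.mp (Finset.mem_coe.mp hy2)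
    have hy2' : f (g u₂) = y2 := hy2eq
    subst hy2'
    set n : ℕ := p'.length with hn
    rcases Nat.eq_zero_or_pos n with hn0 | hn1
    · exact absurd (SimpleGraph.Walk.eq_of_length_eq_zero (p := p') (by omega))
        (crossneq u huS0 u₂ hu₂S0)
    set v : ℕ → V := fun i => if i = 0 then u else if i = n then g u₂
      else Classical.choose (key3 (p'.getVert i)) with hv
    have hv0 : v 0 = u := by simp [hv]
    have hvn : v n = g u₂ := by
      have hne : n ≠ 0 := by omega
      simp [hv, hne]
    have hvmid : ∀ i, i ≠ 0 → i ≠ n → v i = Classical.choose (key3 (p'.getVert i)) := by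
      intro i h1 h2
      simp [hv, h1, h2]
    have hvclose : ∀ i, i ≤ n → G'.dist (p'.getVert i) (f (v i)) ≤ c := by
      intro i hi
      by_cases h1 : i = 0
      · subst h1
        rw [hv0, SimpleGraph.Walk.getVert_zero, SimpleGraph.dist_self]
        exact Nat.zero_le c
      by_cases h2 : i = n
      · rw [h2, hvn, hn, SimpleGraph.Walk.getVert_length, SimpleGraph.dist_self]
        exact Nat.zero_le c
      · rw [hvmid i h1 h2]
        exact Classical.choose_spec (key3 (p'.getVert i))
    have hstep : ∀ i, i < n → G.dist (v i) (v (i + 1)) ≤ sC := by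
      intro i hilt
      have hadj := p'.adj_getVert_succ (by omega : i < p'.length)
      have h1 : G'.dist (p'.getVert i) (p'.getVert (i + 1)) = 1 :=
        SimpleGraph.dist_eq_one_iff_adj.mpr hadj
      have h2 := hvclose i (by omega)
      have h3 := hvclose (i + 1) (by omega)
      have h4 : G'.dist (f (v i)) (f (v (i + 1))) ≤ 2 * c + 1 := by
        have t1 : G'.dist (f (v i)) (f (v (i + 1))) ≤
            G'.dist (f (v i)) (p'.getVert i) + G'.dist (p'.getVert i) (f (v (i + 1))) :=
          hconn'.dist_triangle
        have t2 : G'.dist (p'.getVert i) (f (v (i + 1))) ≤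
            G'.dist (p'.getVert i) (p'.getVert (i + 1)) +
              G'.dist (p'.getVert (i + 1)) (f (v (i + 1))) :=
          hconn'.dist_triangle
        have t3 : G'.dist (f (v i)) (p'.getVert i) ≤ c := by
          rw [SimpleGraph.dist_comm]; exact h2
        omega
      calc G.dist (v i) (v (i + 1)) ≤ a * G'.dist (f (v i)) (f (v (i + 1))) + a * b :=
            key2 _ _
        _ ≤ a * (2 * c + 1) + a * b := by gcongr
        _ = sC := hsC.symm
    have hwalk : ∀ j, j ≤ n → ∃ q : G.Walk u (v j), q.length ≤ sC * j ∧
        ∀ x ∈ q.support, ∃ i, i ≤ j ∧ G.dist x (v i) ≤ sC := by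
      intro j
      induction j with
      | zero =>
        intro _
        refine ⟨SimpleGraph.Walk.nil.copy rfl hv0.symm, by simp, ?_⟩
        intro x hx
        rw [SimpleGraph.Walk.support_copy] at hx
        simp only [SimpleGraph.Walk.support_nil, List.mem_singleton] at hx
        exact ⟨0, le_refl 0, by rw [hx, hv0, SimpleGraph.dist_self]; exact Nat.zero_le _⟩
      | succ j ihj =>
        intro hj
        obtain ⟨q, hqlen, hqsup⟩ := ihj (by omega)
        obtain ⟨w, hw⟩ := (hconn (v j) (v (j + 1))).exists_walk_length_eq_dist
        have hwlen : w.length ≤ sC := by rw [hw]; exact hstep j (by omega)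
        refine ⟨q.append w, ?_, ?_⟩
        · rw [SimpleGraph.Walk.length_append]
          calc q.length + w.length ≤ sC * j + sC := Nat.add_le_add hqlen hwlen
            _ = sC * (j + 1) := by ring
        · intro x hx
          rw [SimpleGraph.Walk.mem_support_append_iff] at hx
          rcases hx with hx | hx
          · obtain ⟨i, hi, hd⟩ := hqsup x hx
            exact ⟨i, by omega, hd⟩
          · refine ⟨j, by omega, ?_⟩
            have ht1 := SimpleGraph.Walk.length_takeUntil_le w hx
            have ht2 := SimpleGraph.dist_le (w.takeUntil x hx)
            rw [SimpleGraph.dist_comm]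
            omega
    obtain ⟨Q, hQlen, hQsup⟩ := hwalk n le_rfl
    by_cases hQF : ∀ x ∈ (Q.copy rfl hvn).support, x ∉ F
    · have hr := hlong u (hS0U u huS0) (g u₂) (hgbij.mapsTo (hS0U u₂ hu₂S0))
        (Q.copy rfl hvn) hQF
      have hlencopy : (Q.copy rfl hvn).length = Q.length :=
        SimpleGraph.Walk.length_copy _ _ _
      have h1 : sC * (r' + 1) < sC * n := by
        have hrreq : rr = sC * (r' + 1) + k0 + 1 := hrr
        linarith [hr, hlencopy, hQlen]
      have h2 : r' + 1 < n := Nat.lt_of_mul_lt_mul_left h1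
      omega
    · push_neg at hQF
      obtain ⟨x, hxQ, hxF⟩ := hQF
      rw [SimpleGraph.Walk.support_copy] at hxQ
      obtain ⟨i, hin, hdxi⟩ := hQsup x hxQ
      have hfar : G'.dist (f x) (p'.getVert i) ≤ ρ := by
        calc G'.dist (f x) (p'.getVert i)
            ≤ G'.dist (f x) (f (v i)) + G'.dist (f (v i)) (p'.getVert i) :=
              hconn'.dist_triangle
          _ ≤ (a * sC + b) + c := by
              have h1 : G'.dist (f x) (f (v i)) ≤ a * sC + b := by
                calc G'.dist (f x) (f (v i)) ≤ a * G.dist x (v i) + b := key1 _ _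
                  _ ≤ a * sC + b := by gcongr
              have h2 : G'.dist (f (v i)) (p'.getVert i) ≤ c := by
                rw [SimpleGraph.dist_comm]; exact hvclose i hin
              omega
          _ = ρ := hρ.symm
      have hmem : p'.getVert i ∈ p'.support :=
        SimpleGraph.Walk.mem_support_iff_exists_getVert.mpr ⟨i, rfl, by omega⟩
      exact absurd ((hF'mem _).mpr ⟨x, hxF, hfar⟩) (havoid _ hmem)
  -- assemble
  refine ⟨U', F', O', ?_, Finset.finite_toSet _, Finset.finite_toSet _, Finset.finite_toSet _,
    hd1, hd2, hd3, hcnt, ⟨φ, ⟨hmap, hinjφ, hsurj⟩, hmatch⟩, hpaths⟩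
  obtain ⟨u0, hu0⟩ := Finset.card_pos.mp hS0pos
  exact ⟨f u0, Finset.mem_coe.mpr (Finset.mem_image_of_mem f hu0)⟩
end

section
/- Let Γ be an infinite group with finite symmetric generating set S, let s ∈ Γ \ {1} with |s|_S = k, and let C ≥ 1. If |B_{3Ck}| ≥ 3C|B_k| (where B_n is the ball of radius n in the word metric), then any maximal (for inclusion) subset T of B_{3Ck} satisfying T ∩ sT = ∅ has |T| ≥ C|B_k|. -/
/-- The ball of radius `n` in the word metric on a group with generating set `S`. -/
def wordBall {Γ : Type*} [Group Γ] (S : Set Γ) (n : ℕ) : Set Γ :=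
  {g | ∃ w : List Γ, (∀ x ∈ w, x ∈ S) ∧ w.length ≤ n ∧ w.prod = g}

lemma wordBall_finite {Γ : Type*} [Group Γ] (S : Finset Γ) (n : ℕ) :
    (wordBall (S : Set Γ) n).Finite := by
  induction n with
  | zero =>
    apply Set.Finite.subset (Set.finite_singleton (1 : Γ))
    rintro g ⟨w, hw, hl, hp⟩
    have : w = [] := List.length_eq_zero_iff.mp (Nat.le_zero.mp hl)
    simp [this] at hp
    simp [← hp]
  | succ n ih =>
    apply Set.Finite.subset (Set.Finite.union ih
      (Set.Finite.biUnion S.finite_toSet (fun a _ => ih.image (a * ·))))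
    rintro g ⟨w, hw, hl, hp⟩
    cases w with
    | nil =>
      left; exact ⟨[], by simp, by simp, by simpa using hp⟩
    | cons a w' =>
      right
      refine Set.mem_biUnion (hw a (by simp)) ⟨w'.prod, ⟨w', fun x hx => hw x (by simp [hx]),
        by simpa using Nat.le_of_succ_le_succ hl, rfl⟩, by simpa using hp⟩

/-- If `Γ` is infinite with finite symmetric generating set `S`, `s ≠ 1` has word length `k`,
`C ≥ 1` and `|B_{3Ck}| ≥ 3C|B_k|`, then any maximal subset `T ⊆ B_{3Ck}` with `T ∩ sT = ∅`
satisfies `|T| ≥ C|B_k|`. -/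
theorem stmt_6 {Γ : Type*} [Group Γ] [Infinite Γ] (S : Finset Γ)
    (hsym : ∀ s ∈ S, s⁻¹ ∈ S) (hgen : Subgroup.closure (S : Set Γ) = ⊤)
    (s : Γ) (hs : s ≠ 1) (k C : ℕ) (hC : 1 ≤ C)
    (hsk : s ∈ wordBall (S : Set Γ) k) (hsk' : s ∉ wordBall (S : Set Γ) (k - 1))
    (hball : 3 * C * (wordBall (S : Set Γ) k).ncard ≤ (wordBall (S : Set Γ) (3 * C * k)).ncard)
    (T : Set Γ) (hT : T ⊆ wordBall (S : Set Γ) (3 * C * k))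
    (hdisj : Disjoint T ((s * ·) '' T))
    (hmax : ∀ T' : Set Γ, T ⊆ T' → T' ⊆ wordBall (S : Set Γ) (3 * C * k) →
      Disjoint T' ((s * ·) '' T') → T' = T) :
    C * (wordBall (S : Set Γ) k).ncard ≤ T.ncard := by
  set B := wordBall (S : Set Γ) (3 * C * k) with hB
  have hBfin : B.Finite := wordBall_finite S _
  have hTfin : T.Finite := hBfin.subset hT
  -- covering
  have hcov : B ⊆ T ∪ (s * ·) '' T ∪ (s⁻¹ * ·) '' T := by
    intro g hg
    by_cases hgT : g ∈ T
    · exact Or.inl (Or.inl hgT)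
    have hne : insert g T ≠ T := by
      intro h
      exact hgT (h ▸ Set.mem_insert g T)
    have hnd : ¬ Disjoint (insert g T) ((s * ·) '' (insert g T)) := fun h =>
      hne (hmax _ (Set.subset_insert g T) (Set.insert_subset hg hT) h)
    rw [Set.not_disjoint_iff] at hnd
    obtain ⟨x, hx1, y, hy, hxy⟩ := hnd
    rcases hx1 with rfl | hxT
    · rcases hy with rfl | hyT
      · have h' : s * y = y := hxy
        exact absurd (mul_eq_right.mp h') hs
      · exact Or.inl (Or.inr ⟨y, hyT, hxy⟩)
    · rcases hy with rfl | hyT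
      · refine Or.inr ⟨x, hxT, ?_⟩
        simp [← hxy]
      · exact absurd hdisj (Set.not_disjoint_iff.mpr ⟨x, hxT, ⟨y, hyT, hxy⟩⟩)
  have h1 : ((s * ·) '' T).ncard = T.ncard :=
    Set.ncard_image_of_injective T (mul_right_injective s)
  have h2 : ((s⁻¹ * ·) '' T).ncard = T.ncard :=
    Set.ncard_image_of_injective T (mul_right_injective s⁻¹)
  have hle : B.ncard ≤ 3 * T.ncard := by
    calc B.ncard ≤ (T ∪ (s * ·) '' T ∪ (s⁻¹ * ·) '' T).ncard :=
          Set.ncard_le_ncard hcov (((hTfin.union (hTfin.image _)).union (hTfin.image _)))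
      _ ≤ (T ∪ (s * ·) '' T).ncard + ((s⁻¹ * ·) '' T).ncard := Set.ncard_union_le _ _
      _ ≤ T.ncard + ((s * ·) '' T).ncard + ((s⁻¹ * ·) '' T).ncard :=
          Nat.add_le_add_right (Set.ncard_union_le _ _) _
      _ = 3 * T.ncard := by rw [h1, h2]; ring
  have : 3 * (C * (wordBall (S : Set Γ) k).ncard) ≤ 3 * T.ncard := by
    calc 3 * (C * (wordBall (S : Set Γ) k).ncard)
        = 3 * C * (wordBall (S : Set Γ) k).ncard := by ring
      _ ≤ B.ncard := hball
      _ ≤ 3 * T.ncard := hle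
  exact Nat.le_of_mul_le_mul_left this (by norm_num)
end

section
/- For an infinite group Γ with finite symmetric generating set S and any element s ≠ 1 with |s|_S ≤ k, and any finite subset T of the ball B_{Ak} (A a constant) with T ∩ sT = ∅: if T is maximal for inclusion with this property and 3|T| < |B_{Ak}|, then a contradiction arises; hence 3|T| ≥ |B_{Ak}|. -/
/-- If `T ⊆ B_{Ak}` with `T ∩ sT = ∅` is maximal for inclusion (adding any further element of
`B_{Ak}` breaks disjointness from the `s`-translate), then `3|T| ≥ |B_{Ak}|`. -/
theorem stmt_7 {Γ : Type*} [Group Γ] [Infinite Γ] (S : Finset Γ)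
    (hsym : ∀ s ∈ S, s⁻¹ ∈ S) (hgen : Subgroup.closure (S : Set Γ) = ⊤)
    (A k : ℕ) (s : Γ) (hs : s ≠ 1) (hsk : s ∈ wordBall (S : Set Γ) k)
    (T : Set Γ) (hTfin : T.Finite) (hT : T ⊆ wordBall (S : Set Γ) (A * k))
    (hdisj : Disjoint T ((s * ·) '' T))
    (hmax : ∀ g ∈ wordBall (S : Set Γ) (A * k), g ∉ T →
      ¬ Disjoint (insert g T) ((s * ·) '' insert g T)) :
    (wordBall (S : Set Γ) (A * k)).ncard ≤ 3 * T.ncard := by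
  have key : wordBall (S : Set Γ) (A * k) ⊆ T ∪ (s * ·) '' T ∪ (s⁻¹ * ·) '' T := by
    intro g hg
    by_cases hgT : g ∈ T
    · exact Or.inl (Or.inl hgT)
    · obtain ⟨x, hx1, hx2⟩ := Set.not_disjoint_iff.mp (hmax g hg hgT)
      obtain ⟨y, hy, hxy⟩ := hx2
      rcases hx1 with rfl | hxT
      · rcases hy with rfl | hyT
        · exact absurd (by simpa using hxy.symm) hs
        · exact Or.inl (Or.inr ⟨y, hyT, hxy⟩)
      · rcases hy with rfl | hyT
        · refine Or.inr ⟨x, hxT, ?_⟩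
          simp only [← hxy]; group
        · exact absurd hdisj (Set.not_disjoint_iff.mpr ⟨x, hxT, ⟨y, hyT, hxy⟩⟩)
  have hfin : (T ∪ (s * ·) '' T ∪ (s⁻¹ * ·) '' T).Finite :=
    ((hTfin.union (hTfin.image _)).union (hTfin.image _))
  have h1 : ((s * ·) '' T).ncard = T.ncard :=
    Set.ncard_image_of_injective _ (mul_right_injective s)
  have h2 : ((s⁻¹ * ·) '' T).ncard = T.ncard :=
    Set.ncard_image_of_injective _ (mul_right_injective s⁻¹)
  calc (wordBall (S : Set Γ) (A * k)).ncard ≤ (T ∪ (s * ·) '' T ∪ (s⁻¹ * ·) '' T).ncard :=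
        Set.ncard_le_ncard key hfin
    _ ≤ (T ∪ (s * ·) '' T).ncard + ((s⁻¹ * ·) '' T).ncard := Set.ncard_union_le _ _
    _ ≤ T.ncard + ((s * ·) '' T).ncard + ((s⁻¹ * ·) '' T).ncard := by
        exact add_le_add_left (Set.ncard_union_le _ _) _
    _ = 3 * T.ncard := by rw [h1, h2]; ring
end

section
/- The pentagon model graph is extraterrestrial. Specifically, for all m, r ∈ N, the sets U = {(h,v) : −3m ≤ h < 0, 0 ≤ v < r}, F = {(0,v) : −r ≤ v ≤ 2r−1}, O = {(h,v) : 0 < h ≤ 3m, 0 ≤ v < r} form an (m, 6m+1, r)-UFO in the pentagon model. -/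
open SimpleGraph Pointwise

/-- The pentagon model: the graph with vertex set `ℤ²`, edges `{(m,n),(m+1,n)}` and
`{(m,n),(2m,n-1)}`. -/
def pentagonGraph : SimpleGraph (ℤ × ℤ) where
  Adj p q := p ≠ q ∧
    ((p.2 = q.2 ∧ (q.1 = p.1 + 1 ∨ p.1 = q.1 + 1)) ∨
      (q.2 = p.2 - 1 ∧ q.1 = 2 * p.1) ∨ (p.2 = q.2 - 1 ∧ p.1 = 2 * q.1))
  symm := by
    constructor
    rintro p q ⟨hne, h⟩
    refine ⟨hne.symm, ?_⟩
    rcases h with ⟨h1, h2⟩ | h | h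
    · exact Or.inl ⟨h1.symm, h2.symm⟩
    · exact Or.inr (Or.inr h)
    · exact Or.inr (Or.inl h)
  loopless := by constructor; rintro p ⟨hne, _⟩; exact hne rfl

lemma pent_adj_y {p q : ℤ × ℤ} (h : pentagonGraph.Adj p q) : |q.2 - p.2| ≤ 1 := by
  obtain ⟨-, h⟩ := h
  rw [abs_le]
  rcases h with ⟨h1, h2⟩ | ⟨h1, h2⟩ | ⟨h1, h2⟩ <;> omega

lemma pent_adj_x {p q : ℤ × ℤ} (h : pentagonGraph.Adj p q) (hp : p.1 < 0) : q.1 ≤ 0 := by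
  obtain ⟨-, h⟩ := h
  rcases h with ⟨h1, h2⟩ | ⟨h1, h2⟩ | ⟨h1, h2⟩ <;> omega

lemma pent_cross {u o : ℤ × ℤ} (p : pentagonGraph.Walk u o) (hu : u.1 < 0) (ho : 0 < o.1) :
    ∃ x ∈ p.support, x.1 = 0 := by
  induction p with
  | nil => omega
  | @cons a b c h q ih =>
    rcases eq_or_lt_of_le (pent_adj_x h hu) with hb | hb
    · exact ⟨b, by simp, hb⟩
    · obtain ⟨x, hx, hx0⟩ := ih hb ho
      exact ⟨x, by simp [hx], hx0⟩

lemma pent_ybound {u o : ℤ × ℤ} (p : pentagonGraph.Walk u o) :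
    ∀ x ∈ p.support, |x.2 - u.2| ≤ (p.length : ℤ) := by
  induction p with
  | nil => intro x hx; simp_all
  | @cons a b c h q ih =>
    intro x hx
    rw [SimpleGraph.Walk.support_cons, List.mem_cons] at hx
    rcases hx with rfl | hx
    · simp
      positivity
    · have h1 := ih x hx
      have h2 := pent_adj_y h
      rw [SimpleGraph.Walk.length_cons]
      have := abs_sub_abs_le_abs_sub (x.2 - a.2) (b.2 - a.2)
      have h3 : |x.2 - a.2| ≤ |x.2 - b.2| + |b.2 - a.2| := by
        calc |x.2 - a.2| = |(x.2 - b.2) + (b.2 - a.2)| := by ring_nf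
          _ ≤ _ := abs_add_le _ _
      push_cast
      omega

lemma pent_walk_right (n : ℕ) (a v : ℤ) :
    ∃ p : pentagonGraph.Walk (a, v) (a + n, v), p.length = n := by
  induction n generalizing a with
  | zero => exact ⟨(SimpleGraph.Walk.nil).copy rfl (by norm_num), by simp⟩
  | succ n ih =>
    obtain ⟨p, hp⟩ := ih (a + 1)
    have hadj : pentagonGraph.Adj (a, v) (a + 1, v) := by
      refine ⟨by simp [Prod.ext_iff], Or.inl ⟨rfl, Or.inl rfl⟩⟩
    refine ⟨(SimpleGraph.Walk.cons hadj p).copy rfl ?_, by rw [SimpleGraph.Walk.length_copy, SimpleGraph.Walk.length_cons, hp]⟩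
    rw [Prod.mk.injEq]; exact ⟨by push_cast; ring, rfl⟩

lemma isUFO_mono {V : Type*} {G : SimpleGraph V} {m m' k r r' : ℕ} {U F O : Set V}
    (h : IsUFO G m' k r' U F O) (hm : m ≤ m') (hr : r ≤ r') : IsUFO G m k r U F O := by
  obtain ⟨h1, h2, h3, h4, h5, h6, h7, h8, h9, h10⟩ := h
  refine ⟨h1, h2, h3, h4, h5, h6, h7, le_trans (Nat.mul_le_mul_right _ hm) h8, h9,
    fun u hu o ho p hp => le_trans hr (h10 u hu o ho p hp)⟩

lemma pent_main : ∀ m r : ℕ, 0 < m → 0 < r →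
    IsUFO pentagonGraph m (6 * m + 1) r
      {p : ℤ × ℤ | -(3 * (m : ℤ)) ≤ p.1 ∧ p.1 < 0 ∧ 0 ≤ p.2 ∧ p.2 < (r : ℤ)}
      {p : ℤ × ℤ | p.1 = 0 ∧ -(r : ℤ) ≤ p.2 ∧ p.2 ≤ 2 * (r : ℤ) - 1}
      {p : ℤ × ℤ | 0 < p.1 ∧ p.1 ≤ 3 * (m : ℤ) ∧ 0 ≤ p.2 ∧ p.2 < (r : ℤ)} := by
  intro m r hm hr
  set U : Set (ℤ × ℤ) := {p : ℤ × ℤ | -(3 * (m : ℤ)) ≤ p.1 ∧ p.1 < 0 ∧ 0 ≤ p.2 ∧ p.2 < (r : ℤ)}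
  set F : Set (ℤ × ℤ) := {p : ℤ × ℤ | p.1 = 0 ∧ -(r : ℤ) ≤ p.2 ∧ p.2 ≤ 2 * (r : ℤ) - 1}
  set O : Set (ℤ × ℤ) := {p : ℤ × ℤ | 0 < p.1 ∧ p.1 ≤ 3 * (m : ℤ) ∧ 0 ≤ p.2 ∧ p.2 < (r : ℤ)}
  have hUf : U = ↑((Finset.Ico (-(3 * (m : ℤ))) 0) ×ˢ (Finset.Ico (0 : ℤ) r)) := by
    ext ⟨a, b⟩
    simp only [Finset.coe_product, Set.mem_prod, Finset.mem_coe, Finset.mem_Ico,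
      Set.mem_setOf_eq, U]
    tauto
  have hFf : F = ↑(({(0 : ℤ)} : Finset ℤ) ×ˢ (Finset.Icc (-(r : ℤ)) (2 * r - 1))) := by
    ext ⟨a, b⟩
    simp only [Finset.coe_product, Set.mem_prod, Finset.mem_coe, Finset.mem_Icc,
      Finset.mem_singleton, Set.mem_setOf_eq, F]
  have hOf : O = ↑((Finset.Ioc (0 : ℤ) (3 * m)) ×ˢ (Finset.Ico (0 : ℤ) r)) := by
    ext ⟨a, b⟩
    simp only [Finset.coe_product, Set.mem_prod, Finset.mem_coe, Finset.mem_Ico,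
      Finset.mem_Ioc, Set.mem_setOf_eq, O]
    tauto
  have hUcard : U.ncard = 3 * m * r := by
    rw [hUf, Set.ncard_coe_finset, Finset.card_product, Int.card_Ico, Int.card_Ico]
    simp; omega
  have hFcard : F.ncard = 3 * r := by
    rw [hFf, Set.ncard_coe_finset, Finset.card_product, Int.card_Icc]
    simp; omega
  refine ⟨⟨(-1, 0), by simp [U]; omega⟩, hUf ▸ Finset.finite_toSet _,
    hFf ▸ Finset.finite_toSet _, hOf ▸ Finset.finite_toSet _, ?_, ?_, ?_, ?_, ?_, ?_⟩
  · rw [Set.disjoint_left]; rintro ⟨a, b⟩ h1 h2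
    simp only [Set.mem_setOf_eq, U, F] at h1 h2; omega
  · rw [Set.disjoint_left]; rintro ⟨a, b⟩ h1 h2
    simp only [Set.mem_setOf_eq, U, O] at h1 h2; omega
  · rw [Set.disjoint_left]; rintro ⟨a, b⟩ h1 h2
    simp only [Set.mem_setOf_eq, F, O] at h1 h2; omega
  · rw [hUcard, hFcard]; ring_nf; omega
  · refine ⟨fun p => (-p.1, p.2), ⟨?_, ?_, ?_⟩, ?_⟩
    · rintro ⟨a, b⟩ h
      simp only [Set.mem_setOf_eq, U, O] at h ⊢; omega
    · rintro ⟨a, b⟩ _ ⟨c, d⟩ _ h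
      simp only [Prod.mk.injEq] at h ⊢
      omega
    · rintro ⟨a, b⟩ h
      refine ⟨(-a, b), ?_, by simp⟩
      simp only [Set.mem_setOf_eq, U, O] at h ⊢; omega
    · rintro ⟨a, b⟩ h
      simp only [Set.mem_setOf_eq, U] at h
      obtain ⟨p, hp⟩ := pent_walk_right ((-2 * a).toNat) a b
      have hcast : a + ((-2 * a).toNat : ℤ) = -a := by omega
      have hp' : (a + ((-2 * a).toNat : ℤ), b) = ((-a, b) : ℤ × ℤ) := by
        rw [Prod.mk.injEq]; exact ⟨hcast, rfl⟩
      let p' := p.copy rfl hp'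
      refine ⟨p'.reachable, ?_⟩
      calc pentagonGraph.dist (a, b) (-a, b) ≤ p'.length := SimpleGraph.dist_le p'
        _ = (-2 * a).toNat := by simp [p', hp]
        _ ≤ 6 * m + 1 := by omega
  · rintro ⟨a, b⟩ hu ⟨c, d⟩ ho p hp
    simp only [Set.mem_setOf_eq, U, O] at hu ho
    obtain ⟨x, hx, hx0⟩ := pent_cross p (by simpa using hu.2.1) (by simpa using ho.1)
    have hxF := hp x hx
    simp only [Set.mem_setOf_eq, F, hx0, true_and, not_and, not_le] at hxF
    have hy := pent_ybound p x hx
    rw [abs_le] at hy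
    simp only at hy
    omega

/-- The pentagon model is extraterrestrial; specifically, for all positive `m, r` the sets
`U = [-3m,-1] × [0,r-1]`, `F = {0} × [-r,2r-1]`, `O = [1,3m] × [0,r-1]` form an
`(m, 6m+1, r)`-UFO. -/
theorem stmt_10 :
    Extraterrestrial pentagonGraph ∧
    ∀ m r : ℕ, 0 < m → 0 < r →
      IsUFO pentagonGraph m (6 * m + 1) r
        {p : ℤ × ℤ | -(3 * (m : ℤ)) ≤ p.1 ∧ p.1 < 0 ∧ 0 ≤ p.2 ∧ p.2 < (r : ℤ)}
        {p : ℤ × ℤ | p.1 = 0 ∧ -(r : ℤ) ≤ p.2 ∧ p.2 ≤ 2 * (r : ℤ) - 1}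
        {p : ℤ × ℤ | 0 < p.1 ∧ p.1 ≤ 3 * (m : ℤ) ∧ 0 ≤ p.2 ∧ p.2 < (r : ℤ)} := by
  refine ⟨?_, pent_main⟩
  intro m
  refine ⟨6 * (m + 1) + 1, fun r => ?_⟩
  exact ⟨_, _, _, isUFO_mono (pent_main (m + 1) (r + 1) (by omega) (by omega))
    (by omega) (by omega)⟩
end

section
/- Let Γ be a finitely generated group and H ≤ Γ an amenable subgroup. If for some finite symmetric generating set S the Schreier graph Sch(Γ,H,S) is extraterrestrial, then Γ is extraterrestrial. -/
open SimpleGraph Pointwise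

/-- The Schreier graph of a group `Γ` with respect to a subgroup `H` and a set `S`:
vertices are the right cosets `Hg`, with an edge between `Hg` and `Hgs` for `s ∈ S`. -/
def schreierGraph {Γ : Type*} [Group Γ] (H : Subgroup Γ) (S : Set Γ) :
    SimpleGraph (Quotient (QuotientGroup.rightRel H)) where
  Adj x y := x ≠ y ∧ ∃ s ∈ S, ∃ g : Γ,
      (x = Quotient.mk _ g ∧ y = Quotient.mk _ (g * s)) ∨
      (y = Quotient.mk _ g ∧ x = Quotient.mk _ (g * s))
  symm := ⟨by rintro x y ⟨hne, s, hs, g, h⟩; exact ⟨hne.symm, s, hs, g, h.symm⟩⟩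
  loopless := ⟨by rintro x ⟨hne, _⟩; exact hne rfl⟩
open Pointwise in
/-- Følner characterization of amenability for discrete groups. -/
def FolnerAmenable (H : Type*) [Group H] : Prop :=
  ∀ (K : Finset H) (ε : ℝ), 0 < ε → ∃ F : Finset H, F.Nonempty ∧
    ((((F : Set H) * (K : Set H)) \ (F : Set H)).ncard : ℝ) ≤ ε * F.card

section aux
variable {Γ : Type*} [Group Γ] (H : Subgroup Γ) (S : Finset Γ)

private lemma pi_eq_iff (a b : Γ) :
    Quotient.mk (QuotientGroup.rightRel H) a = Quotient.mk (QuotientGroup.rightRel H) b ↔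
      b * a⁻¹ ∈ H := by
  rw [Quotient.eq]; exact QuotientGroup.rightRel_apply

private lemma pi_mul_left {h : Γ} (hh : h ∈ H) (γ : Γ) :
    Quotient.mk (QuotientGroup.rightRel H) (h * γ) = Quotient.mk (QuotientGroup.rightRel H) γ := by
  rw [pi_eq_iff]
  have : γ * (h * γ)⁻¹ = h⁻¹ := by group
  rw [this]; exact inv_mem hh

private lemma step_lift {x z : Quotient (QuotientGroup.rightRel H)}
    (h : (schreierGraph H (S : Set Γ)).Adj x z) :
    ∃ σ : Γ, ∀ γ : Γ, Quotient.mk (QuotientGroup.rightRel H) γ = x →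
      (cayleyGraph Γ (S : Set Γ)).Adj γ (γ * σ) ∧
        Quotient.mk (QuotientGroup.rightRel H) (γ * σ) = z := by
  obtain ⟨hne, s, hs, g, ⟨hx, hz⟩ | ⟨hz, hx⟩⟩ := h
  · refine ⟨s, fun γ hγ => ?_⟩
    have hmem : g * γ⁻¹ ∈ H := by rw [hx, pi_eq_iff] at hγ; exact hγ
    have h1 : Quotient.mk (QuotientGroup.rightRel H) (γ * s) = z := by
      rw [hz, pi_eq_iff]
      have : g * s * (γ * s)⁻¹ = g * γ⁻¹ := by group
      rw [this]; exact hmem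
    refine ⟨⟨fun he => hne ?_, Or.inl (by simpa using hs)⟩, h1⟩
    rw [← hγ, ← h1, ← he]
  · refine ⟨s⁻¹, fun γ hγ => ?_⟩
    have hmem : g * s * γ⁻¹ ∈ H := by rw [hx, pi_eq_iff] at hγ; exact hγ
    have h1 : Quotient.mk (QuotientGroup.rightRel H) (γ * s⁻¹) = z := by
      rw [hz, pi_eq_iff]
      have : g * (γ * s⁻¹)⁻¹ = g * s * γ⁻¹ := by group
      rw [this]; exact hmem
    refine ⟨⟨fun he => hne ?_, Or.inr (by simpa using hs)⟩, h1⟩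
    rw [← hγ, ← h1, ← he]

private lemma lift_walk {x y : Quotient (QuotientGroup.rightRel H)}
    (q : (schreierGraph H (S : Set Γ)).Walk x y) :
    ∃ w : Γ, ∀ γ : Γ, Quotient.mk (QuotientGroup.rightRel H) γ = x →
      Quotient.mk (QuotientGroup.rightRel H) (γ * w) = y ∧
        ∃ p : (cayleyGraph Γ (S : Set Γ)).Walk γ (γ * w), p.length ≤ q.length := by
  induction q with
  | nil =>
    refine ⟨1, fun γ hγ => ⟨by simpa using hγ, ⟨(Walk.nil' γ).copy rfl (mul_one γ).symm, by simp⟩⟩⟩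
  | @cons x z y h q ih =>
    obtain ⟨σ, hσ⟩ := step_lift H S h
    obtain ⟨w, hw⟩ := ih
    refine ⟨σ * w, fun γ hγ => ?_⟩
    obtain ⟨hadj, hπ⟩ := hσ γ hγ
    obtain ⟨hy, p, hp⟩ := hw (γ * σ) hπ
    refine ⟨by rwa [← mul_assoc], ⟨(Walk.cons hadj p).copy rfl (mul_assoc γ σ w), ?_⟩⟩
    simpa using Nat.succ_le_succ hp

private lemma proj_walk {γ δ : Γ} (p : (cayleyGraph Γ (S : Set Γ)).Walk γ δ) :
    ∃ q : (schreierGraph H (S : Set Γ)).Walk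
        (Quotient.mk (QuotientGroup.rightRel H) γ) (Quotient.mk (QuotientGroup.rightRel H) δ),
      q.length ≤ p.length ∧
        ∀ y ∈ q.support, ∃ c ∈ p.support, Quotient.mk (QuotientGroup.rightRel H) c = y := by
  induction p with
  | nil => exact ⟨Walk.nil, le_refl _, by simp⟩
  | @cons γ b δ h p ih =>
    obtain ⟨q, hlen, hsup⟩ := ih
    by_cases he : Quotient.mk (QuotientGroup.rightRel H) γ = Quotient.mk (QuotientGroup.rightRel H) b
    · refine ⟨q.copy he.symm rfl, by simpa using Nat.le_succ_of_le hlen, fun y hy => ?_⟩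
      rw [Walk.support_copy] at hy
      obtain ⟨c, hc, hc'⟩ := hsup y hy
      exact ⟨c, by simp [hc], hc'⟩
    · have hadj : (schreierGraph H (S : Set Γ)).Adj
          (Quotient.mk (QuotientGroup.rightRel H) γ) (Quotient.mk (QuotientGroup.rightRel H) b) := by
        obtain ⟨hne, hs | hs⟩ := h
        · exact ⟨he, γ⁻¹ * b, hs, γ, Or.inl ⟨rfl, by simp⟩⟩
        · exact ⟨he, b⁻¹ * γ, hs, b, Or.inr ⟨rfl, by simp⟩⟩
      refine ⟨Walk.cons hadj q, by simpa using hlen, fun y hy => ?_⟩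
      rw [Walk.support_cons] at hy
      rcases List.mem_cons.mp hy with rfl | hy
      · exact ⟨γ, by simp, rfl⟩
      · obtain ⟨c, hc, hc'⟩ := hsup y hy
        exact ⟨c, by simp [hc], hc'⟩

end aux

section aux2
variable {Γ : Type*} [Group Γ] [DecidableEq Γ]

private def wordSet (S : Finset Γ) : ℕ → Finset Γ
  | 0 => {1}
  | n + 1 => wordSet S n ∪ S * wordSet S n

private lemma wordSet_mono (S : Finset Γ) : ∀ {n m : ℕ}, n ≤ m → wordSet S n ⊆ wordSet S m := by
  intro n m h
  induction h with
  | refl => exact Finset.Subset.refl _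
  | step _ ih => exact ih.trans (Finset.subset_union_left)

end aux2

section aux3
variable {Γ : Type*} [Group Γ]

private lemma folner_gamma (H : Subgroup Γ) (hH : FolnerAmenable H) [DecidableEq Γ]
    (K : Finset Γ) (hK : ∀ x ∈ K, x ∈ H) :
    ∃ T : Finset Γ, T.Nonempty ∧ (∀ t ∈ T, t ∈ H) ∧ (T * K).card ≤ 2 * T.card := by
  classical
  let K' : Finset H := K.subtype (· ∈ H)
  obtain ⟨T', hT'ne, hT'⟩ := hH K' 1 one_pos
  refine ⟨T'.image (↑· : H → Γ), hT'ne.image _, fun t ht => ?_, ?_⟩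
  · obtain ⟨t', _, rfl⟩ := Finset.mem_image.mp ht
    exact t'.2
  · have hinj : Function.Injective ((↑·) : H → Γ) := Subtype.val_injective
    have hKim : (K'.image (↑· : H → Γ)) = K := by
      ext x
      simp only [Finset.mem_image, Finset.mem_subtype, K']
      constructor
      · rintro ⟨a, ha, rfl⟩; exact ha
      · intro hx; exact ⟨⟨x, hK x hx⟩, hx, rfl⟩
    set T : Finset Γ := T'.image (↑· : H → Γ) with hT
    have hcards : T.card = T'.card := Finset.card_image_of_injective _ hinj
    -- transfer the Følner inequality to Γ
    have him : ((↑·) : H → Γ) '' (((T' : Set H) * (K' : Set H)) \ (T' : Set H))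
        = ((T : Set Γ) * (K : Set Γ)) \ (T : Set Γ) := by
      rw [Set.image_diff hinj]
      congr 1
      · have this : (Subtype.val : H → Γ) '' ((T' : Set H) * (K' : Set H))
            = (Subtype.val : H → Γ) '' (T' : Set H) * (Subtype.val : H → Γ) '' (K' : Set H) := by
          have := Set.image_mul (H.subtype) (s := (T' : Set H)) (t := (K' : Set H))
          simpa using this
        rw [this]
        congr 1
        · rw [hT]; simp [Finset.coe_image]
        · rw [← hKim]; simp [Finset.coe_image]
      · rw [hT]; simp [Finset.coe_image]
    have h1 : (((T : Set Γ) * (K : Set Γ)) \ (T : Set Γ)).ncard ≤ T.card := by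
      rw [← him, Set.ncard_image_of_injective _ hinj]
      rw [← hcards] at hT'
      exact_mod_cast (by simpa using hT' : ((((T' : Set H) * (K' : Set H)) \ (T' : Set H)).ncard : ℝ) ≤ (T.card : ℝ))
    -- now bound the Finset product
    have hsub : (T * K : Finset Γ) ⊆ T ∪ ((T * K) \ T) := by
      intro a ha
      by_cases h : a ∈ T
      · exact Finset.mem_union_left _ h
      · exact Finset.mem_union_right _ (Finset.mem_sdiff.mpr ⟨ha, h⟩)
    calc (T * K).card ≤ (T ∪ ((T * K) \ T)).card := Finset.card_le_card hsub
      _ ≤ T.card + ((T * K) \ T).card := Finset.card_union_le _ _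
      _ ≤ T.card + T.card := by
          refine Nat.add_le_add_left ?_ _
          have : (((T * K) \ T : Finset Γ) : Set Γ) = ((T : Set Γ) * (K : Set Γ)) \ (T : Set Γ) := by
            push_cast; rfl
          rw [← Set.ncard_coe_finset, this]
          exact h1
      _ = 2 * T.card := (two_mul _).symm

end aux3
section aux4
variable {Γ : Type*} [Group Γ] [DecidableEq Γ]

private lemma one_mem_wordSet (S : Finset Γ) : ∀ n, (1 : Γ) ∈ wordSet S n
  | 0 => by simp [wordSet]
  | n + 1 => Finset.mem_union_left _ (one_mem_wordSet S n)

private lemma walk_label (S : Finset Γ) (hsym : ∀ s ∈ S, s⁻¹ ∈ S)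
    {u δ : Γ} (p : (cayleyGraph Γ (S : Set Γ)).Walk u δ) :
    ∀ c ∈ p.support, u⁻¹ * c ∈ wordSet S p.length := by
  induction p with
  | nil =>
    intro c hc
    rw [SimpleGraph.Walk.support_nil, List.mem_singleton] at hc
    subst hc; simp [wordSet]
  | @cons u b δ h p ih =>
    intro c hc
    rw [SimpleGraph.Walk.support_cons] at hc
    rcases List.mem_cons.mp hc with rfl | hc
    · simpa using one_mem_wordSet S _
    · have hs : u⁻¹ * b ∈ S := by
        rcases h.2 with h' | h'
        · exact h'
        · simpa using hsym _ h'
      have hm := ih c hc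
      have he : u⁻¹ * c = (u⁻¹ * b) * (b⁻¹ * c) := by group
      rw [SimpleGraph.Walk.length_cons, wordSet, he]
      exact Finset.mem_union_right _ (Finset.mul_mem_mul hs hm)

end aux4
/-- A finitely generated group is extraterrestrial if its Cayley graph with respect to some
(equivalently, any) finite symmetric generating set is extraterrestrial. -/
def GroupExtraterrestrial (Γ : Type*) [Group Γ] : Prop :=
  ∃ S : Finset Γ, (∀ s ∈ S, s⁻¹ ∈ S) ∧ Subgroup.closure (S : Set Γ) = ⊤ ∧
    Extraterrestrial (cayleyGraph Γ (S : Set Γ))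
/-- If `H ≤ Γ` is an amenable subgroup and the Schreier graph `Sch(Γ,H,S)` is extraterrestrial
for some finite symmetric generating set `S`, then `Γ` is extraterrestrial. -/
theorem stmt_14 {Γ : Type*} [Group Γ] (H : Subgroup Γ) (hH : FolnerAmenable H)
    (S : Finset Γ) (hsym : ∀ s ∈ S, s⁻¹ ∈ S) (hgen : Subgroup.closure (S : Set Γ) = ⊤)
    (hSch : Extraterrestrial (schreierGraph H (S : Set Γ))) :
    Extraterrestrial (cayleyGraph Γ (S : Set Γ)) := by
  classical
  intro m
  obtain ⟨k, hk⟩ := hSch (2 * m)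
  refine ⟨k, fun r => ?_⟩
  obtain ⟨U', F', O', hU'ne, hU'fin, hF'fin, hO'fin, hUF', hUO', hFO', hcard',
    ⟨f', hbij', hmatch'⟩, hpath'⟩ := hk r
  have hout : ∀ x : Quotient (QuotientGroup.rightRel H),
      Quotient.mk (QuotientGroup.rightRel H) x.out = x := Quotient.out_eq
  -- choose matching words
  have hwex : ∀ x ∈ U', ∃ w : Γ, ∀ γ : Γ, Quotient.mk (QuotientGroup.rightRel H) γ = x →
      Quotient.mk (QuotientGroup.rightRel H) (γ * w) = f' x ∧
        ∃ p : (cayleyGraph Γ (S : Set Γ)).Walk γ (γ * w), p.length ≤ k := by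
    intro x hx
    obtain ⟨hreach, hdist⟩ := hmatch' x hx
    obtain ⟨q, hq⟩ := hreach.exists_walk_length_eq_dist
    obtain ⟨w, hw⟩ := lift_walk H S q
    refine ⟨w, fun γ hγ => ?_⟩
    obtain ⟨h1, p, hp⟩ := hw γ hγ
    exact ⟨h1, p, hp.trans (by rw [hq]; exact hdist)⟩
  let w : Quotient (QuotientGroup.rightRel H) → Γ :=
    fun x => if h : x ∈ U' then (hwex x h).choose else 1
  have hw : ∀ x, ∀ hx : x ∈ U', ∀ γ : Γ, Quotient.mk (QuotientGroup.rightRel H) γ = x →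
      Quotient.mk (QuotientGroup.rightRel H) (γ * w x) = f' x ∧
        ∃ p : (cayleyGraph Γ (S : Set Γ)).Walk γ (γ * w x), p.length ≤ k := by
    intro x hx
    have : w x = (hwex x hx).choose := dif_pos hx
    rw [this]
    exact (hwex x hx).choose_spec
  -- finsets
  let U'f := hU'fin.toFinset
  let F'f := hF'fin.toFinset
  let gU' : Finset Γ := U'f.image Quotient.out
  let gF' : Finset Γ := F'f.image Quotient.out
  let K0 : Finset Γ := (gU' * wordSet S r * gF'⁻¹).filter (· ∈ H)
  obtain ⟨T, hTne, hTH, hTK⟩ := folner_gamma H hH K0 (fun x hx => (Finset.mem_filter.mp hx).2)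
  let Uf : Finset Γ := (T ×ˢ U'f).image fun pr => pr.1 * pr.2.out
  let Of : Finset Γ := (T ×ˢ U'f).image fun pr => pr.1 * (pr.2.out * w pr.2)
  let Ff : Finset Γ := T * K0 * gF'
  -- decompositions
  have hUdec : ∀ u ∈ Uf, ∃ t x, t ∈ T ∧ x ∈ U' ∧ u = t * x.out := by
    intro u hu
    obtain ⟨⟨t, x⟩, hmem, rfl⟩ := Finset.mem_image.mp hu
    obtain ⟨ht, hx⟩ := Finset.mem_product.mp hmem
    exact ⟨t, x, ht, (Set.Finite.mem_toFinset _).mp hx, rfl⟩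
  have hOdec : ∀ o ∈ Of, ∃ t x, t ∈ T ∧ x ∈ U' ∧ o = t * (x.out * w x) := by
    intro o ho
    obtain ⟨⟨t, x⟩, hmem, rfl⟩ := Finset.mem_image.mp ho
    obtain ⟨ht, hx⟩ := Finset.mem_product.mp hmem
    exact ⟨t, x, ht, (Set.Finite.mem_toFinset _).mp hx, rfl⟩
  have hFdec : ∀ c ∈ Ff, ∃ t κ y, t ∈ T ∧ κ ∈ K0 ∧ y ∈ F' ∧ c = t * κ * y.out := by
    intro c hc
    obtain ⟨a, ha, b, hb, rfl⟩ := Finset.mem_mul.mp hc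
    obtain ⟨t, ht, κ, hκ, rfl⟩ := Finset.mem_mul.mp ha
    obtain ⟨y, hy, rfl⟩ := Finset.mem_image.mp hb
    exact ⟨t, κ, y, ht, hκ, (Set.Finite.mem_toFinset _).mp hy, rfl⟩
  -- projections
  have hπUf : ∀ t x, t ∈ T → x ∈ U' →
      Quotient.mk (QuotientGroup.rightRel H) (t * x.out) = x := by
    intro t x ht _
    rw [pi_mul_left H (hTH t ht), hout]
  have hπOf : ∀ t x, t ∈ T → x ∈ U' →
      Quotient.mk (QuotientGroup.rightRel H) (t * (x.out * w x)) = f' x := by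
    intro t x ht hx
    rw [pi_mul_left H (hTH t ht)]
    exact (hw x hx x.out (hout x)).1
  have hπFf : ∀ c ∈ Ff, Quotient.mk (QuotientGroup.rightRel H) c ∈ F' := by
    intro c hc
    obtain ⟨t, κ, y, ht, hκ, hy, rfl⟩ := hFdec c hc
    rw [mul_assoc, pi_mul_left H (hTH t ht), pi_mul_left H ((Finset.mem_filter.mp hκ).2), hout]
    exact hy
  have hπUf' : ∀ u ∈ Uf, Quotient.mk (QuotientGroup.rightRel H) u ∈ U' := by
    intro u hu
    obtain ⟨t, x, ht, hx, rfl⟩ := hUdec u hu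
    rw [hπUf t x ht hx]; exact hx
  have hπOf' : ∀ o ∈ Of, Quotient.mk (QuotientGroup.rightRel H) o ∈ O' := by
    intro o ho
    obtain ⟨t, x, ht, hx, rfl⟩ := hOdec o ho
    rw [hπOf t x ht hx]; exact hbij'.mapsTo hx
  refine ⟨↑Uf, ↑Ff, ↑Of, ?_, Uf.finite_toSet, Ff.finite_toSet, Of.finite_toSet, ?_, ?_, ?_, ?_, ?_, ?_⟩
  · -- nonempty
    refine Finset.coe_nonempty.mpr (Finset.Nonempty.image ?_ _)
    exact hTne.product (Set.Finite.toFinset_nonempty _ |>.mpr hU'ne)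
  · -- Disjoint U F
    rw [Set.disjoint_left]
    intro u hu hu'
    exact Set.disjoint_left.mp hUF' (hπUf' u hu) (hπFf u hu')
  · rw [Set.disjoint_left]
    intro u hu hu'
    exact Set.disjoint_left.mp hUO' (hπUf' u hu) (hπOf' u hu')
  · rw [Set.disjoint_left]
    intro c hc hc'
    exact Set.disjoint_left.mp hFO' (hπFf c hc) (hπOf' c hc')
  · -- cardinality
    rw [Set.ncard_coe_finset, Set.ncard_coe_finset]
    have hF : Ff.card ≤ 2 * T.card * F'f.card := by
      calc Ff.card ≤ (T * K0).card * gF'.card := Finset.card_mul_le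
        _ ≤ 2 * T.card * F'f.card :=
          Nat.mul_le_mul hTK (Finset.card_image_le)
    have hU : Uf.card = T.card * U'f.card := by
      rw [← Finset.card_product]
      apply Finset.card_image_of_injOn
      rintro ⟨t, x⟩ hmem ⟨t', x'⟩ hmem' he
      obtain ⟨ht, hx⟩ := Finset.mem_product.mp hmem
      obtain ⟨ht', hx'⟩ := Finset.mem_product.mp hmem'
      have hx2 := (Set.Finite.mem_toFinset _).mp hx
      have hx2' := (Set.Finite.mem_toFinset _).mp hx'
      have hxx : x = x' := by
        have := congrArg (Quotient.mk (QuotientGroup.rightRel H)) he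
        rwa [hπUf t x ht hx2, hπUf t' x' ht' hx2'] at this
      subst hxx
      simp only [Prod.mk.injEq]
      exact ⟨mul_right_cancel he, trivial⟩
    have hcard'' : 2 * m * F'f.card ≤ U'f.card := by
      rwa [Set.ncard_eq_toFinset_card _ hF'fin, Set.ncard_eq_toFinset_card _ hU'fin] at hcard'
    calc m * Ff.card ≤ m * (2 * T.card * F'f.card) := Nat.mul_le_mul_left _ hF
      _ = T.card * (2 * m * F'f.card) := by ring
      _ ≤ T.card * U'f.card := Nat.mul_le_mul_left _ hcard''
      _ = Uf.card := hU.symm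
  · -- matching
    refine ⟨fun γ => γ * w (Quotient.mk (QuotientGroup.rightRel H) γ), ⟨?_, ?_, ?_⟩, ?_⟩
    · -- MapsTo
      intro u hu
      obtain ⟨t, x, ht, hx, rfl⟩ := hUdec u (Finset.mem_coe.mp hu)
      show t * x.out * w (Quotient.mk (QuotientGroup.rightRel H) (t * x.out)) ∈ (Of : Set Γ)
      rw [hπUf t x ht hx]
      have : t * x.out * w x = t * (x.out * w x) := by rw [mul_assoc]
      rw [this]
      exact Finset.mem_coe.mpr (Finset.mem_image.mpr
        ⟨(t, x), Finset.mem_product.mpr ⟨ht, (Set.Finite.mem_toFinset _).mpr hx⟩, rfl⟩)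
    · -- InjOn
      intro u hu u' hu' he
      dsimp only at he
      obtain ⟨t, x, ht, hx, rfl⟩ := hUdec u (Finset.mem_coe.mp hu)
      obtain ⟨t', x', ht', hx', rfl⟩ := hUdec u' (Finset.mem_coe.mp hu')
      rw [hπUf t x ht hx, hπUf t' x' ht' hx'] at he
      have hxx : x = x' := by
        apply hbij'.injOn hx hx'
        have := congrArg (Quotient.mk (QuotientGroup.rightRel H)) he
        rwa [mul_assoc, mul_assoc, hπOf t x ht hx, hπOf t' x' ht' hx'] at this
      subst hxx
      have : t = t' := by
        have := mul_right_cancel he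
        exact mul_right_cancel this
      rw [this]
    · -- SurjOn
      intro o ho
      obtain ⟨t, x, ht, hx, rfl⟩ := hOdec o (Finset.mem_coe.mp ho)
      refine ⟨t * x.out, Finset.mem_coe.mpr (Finset.mem_image.mpr
        ⟨(t, x), Finset.mem_product.mpr ⟨ht, (Set.Finite.mem_toFinset _).mpr hx⟩, rfl⟩), ?_⟩
      dsimp only
      rw [hπUf t x ht hx, mul_assoc]
    · -- Reachable and dist
      intro u hu
      obtain ⟨t, x, ht, hx, rfl⟩ := hUdec u (Finset.mem_coe.mp hu)
      dsimp only
      rw [hπUf t x ht hx]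
      obtain ⟨p, hp⟩ := (hw x hx (t * x.out) (hπUf t x ht hx)).2
      exact ⟨p.reachable, (SimpleGraph.dist_le p).trans hp⟩
  · -- the r-condition
    intro u hu o ho p havoid
    by_contra hlt
    push_neg at hlt
    obtain ⟨q, hqlen, hqsup⟩ := proj_walk H S p
    have hhit : ∃ y ∈ q.support, y ∈ F' := by
      by_contra hno
      push_neg at hno
      have := hpath' _ (hπUf' u (Finset.mem_coe.mp hu)) _ (hπOf' o (Finset.mem_coe.mp ho)) q hno
      omega
    obtain ⟨y, hy, hyF⟩ := hhit
    obtain ⟨c, hc, hπc⟩ := hqsup y hy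
    -- c lies in F, contradiction
    obtain ⟨t, x, ht, hx, hu'⟩ := hUdec u (Finset.mem_coe.mp hu)
    have hv : u⁻¹ * c ∈ wordSet S r := by
      have h1 := walk_label S hsym p c hc
      exact wordSet_mono S (by omega) h1
    set v := u⁻¹ * c with hvdef
    have hcv : c = t * (x.out * v) := by
      rw [hvdef, hu']; group
    have hκH : x.out * v * y.out⁻¹ ∈ H := by
      have h2 : Quotient.mk (QuotientGroup.rightRel H) (x.out * v) = y := by
        rw [← pi_mul_left H (hTH t ht) (x.out * v), ← hcv, hπc]
      rw [← hout y, pi_eq_iff] at h2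
      have h3 := inv_mem h2
      rwa [mul_inv_rev, inv_inv] at h3
    have hκK0 : x.out * v * y.out⁻¹ ∈ K0 := by
      refine Finset.mem_filter.mpr ⟨?_, hκH⟩
      refine Finset.mul_mem_mul (Finset.mul_mem_mul ?_ hv) (Finset.inv_mem_inv ?_)
      · exact Finset.mem_image.mpr ⟨x, (Set.Finite.mem_toFinset _).mpr hx, rfl⟩
      · exact Finset.mem_image.mpr ⟨y, (Set.Finite.mem_toFinset _).mpr hyF, rfl⟩
    have hcF : c ∈ Ff := by
      have : c = t * (x.out * v * y.out⁻¹) * y.out := by rw [hcv]; group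
      rw [this]
      exact Finset.mul_mem_mul (Finset.mul_mem_mul ht hκK0)
        (Finset.mem_image.mpr ⟨y, (Set.Finite.mem_toFinset _).mpr hyF, rfl⟩)
    exact havoid c hc (Finset.mem_coe.mpr hcF)
end

section
/- In a free product with amalgamation G₁ *_H G₂ where both embeddings H → G₁ and H → G₂ are proper (not surjective), let g₁ ∈ G₁ be a nontrivial coset representative of H\G₁ and g₂ ∈ G₂ a nontrivial coset representative of H\G₂. Then for every n ≥ 1, the cosets H(g₁g₂)ⁿ and H(g₂g₁)ⁿ are distinct and lie in distinct connected components of the Schreier graph Sch(G₁*_H G₂, H, S) after removing the vertex H, where S = S₁ ∪ S₂ for finite symmetric generating sets S₁, S₂ of G₁, G₂. -/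
open Monoid PushoutI List

namespace SchreierAux

variable {ι : Type*} {G : ι → Type*} {H : Type*} [Group H] [∀ i, Group (G i)]
  (φ : ∀ i, H →* G i)

/-- A list of letters is alternating-reduced. -/
def AltRed (L : List (Σ i, G i)) : Prop :=
  (∀ p ∈ L, p.2 ∉ (φ p.1).range) ∧ List.Chain' (· ≠ ·) (L.map Sigma.fst)

/-- product of a list of letters in the pushout -/
def prodL (L : List (Σ i, G i)) : PushoutI φ :=
  (L.map fun p => of (φ := φ) p.1 p.2).prod

@[simp] lemma prodL_nil : prodL φ ([] : List (Σ i, G i)) = 1 := rfl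

lemma prodL_append (L₁ L₂ : List (Σ i, G i)) :
    prodL φ (L₁ ++ L₂) = prodL φ L₁ * prodL φ L₂ := by
  simp [prodL]

@[simp] lemma prodL_concat (L : List (Σ i, G i)) (p : Σ i, G i) :
    prodL φ (L ++ [p]) = prodL φ L * of (φ := φ) p.1 p.2 := by
  simp [prodL_append, prodL]

/-- Build a `CoprodI.Word` out of an `AltRed` list. -/
lemma exists_word (L : List (Σ i, G i)) (hL : AltRed φ L) :
    ∃ w : CoprodI.Word G, w.toList = L := by
  refine ⟨⟨L, ?_, ?_⟩, rfl⟩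
  · intro l hl h1
    exact hL.1 l hl (h1 ▸ one_mem _)
  · exact (List.isChain_map _).mp hL.2

lemma ofCoprodI_word_prod (w : CoprodI.Word G) :
    ofCoprodI (φ := φ) w.prod = prodL φ w.toList := by
  rw [CoprodI.Word.prod, map_list_prod, prodL, List.map_map]
  exact congrArg _ (List.map_congr_left fun l _ => by simp)

end SchreierAux

namespace SchreierAux

variable {ι : Type*} {G : ι → Type*} {H : Type*} [Group H] [∀ i, Group (G i)]
  (φ : ∀ i, H →* G i)

lemma headIdx_unique (hφ : ∀ i, Function.Injective (φ i))
    {h h' : H} {L L' : List (Σ i, G i)} (hL : AltRed φ L) (hL' : AltRed φ L')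
    (heq : base φ h * prodL φ L = base φ h' * prodL φ L') :
    L.map Sigma.fst = L'.map Sigma.fst := by
  classical
  obtain ⟨d⟩ := NormalWord.transversal_nonempty φ hφ
  obtain ⟨w, hw⟩ := exists_word φ L hL
  obtain ⟨w', hw'⟩ := exists_word φ L' hL'
  have hred : Reduced φ w := fun g hg => hL.1 g (hw ▸ hg)
  have hred' : Reduced φ w' := fun g hg => hL'.1 g (hw' ▸ hg)
  obtain ⟨n, hn1, hn2⟩ := hred.exists_normalWord_prod_eq d
  obtain ⟨n', hn1', hn2'⟩ := hred'.exists_normalWord_prod_eq d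
  have key : (h • n) = (h' • n') := by
    apply NormalWord.prod_injective
    rw [NormalWord.prod_base_smul, NormalWord.prod_base_smul, hn1, hn1',
      ofCoprodI_word_prod, ofCoprodI_word_prod, hw, hw', heq]
  have hlist : n.toList = n'.toList := by
    have := congrArg (fun w : NormalWord d => w.toList) key
    simpa [NormalWord.base_smul_def'] using this
  rw [← hw, ← hw', ← hn2, ← hn2', hlist]

/-- `g` is `base h` times an alternating reduced word whose first index is `o`. -/
def P (g : PushoutI φ) (o : Option ι) : Prop :=
  ∃ (h : H) (L : List (Σ i, G i)), AltRed φ L ∧ g = base φ h * prodL φ L ∧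
    (L.map Sigma.fst).head? = o

lemma exists_P (hφ : ∀ i, Function.Injective (φ i)) (g : PushoutI φ) :
    ∃ o, P φ g o := by
  classical
  obtain ⟨d⟩ := NormalWord.transversal_nonempty φ hφ
  set n : NormalWord d := Monoid.PushoutI.NormalWord.equiv g with hn
  refine ⟨((n.toList.map Sigma.fst).head?), n.head, n.toList, ⟨?_, ?_⟩, ?_, rfl⟩
  · rintro ⟨i, x⟩ hx hr
    have hset : x ∈ d.set i := n.normalized i x hx
    have hone : x ≠ 1 := n.toWord.ne_one _ hx
    apply hone
    have h2 := (Subgroup.IsComplement.equiv_snd_eq_self_iff_mem (d.compl i)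
      (one_mem _)).2 hset
    have h1 := (Subgroup.IsComplement.coe_equiv_snd_eq_one_iff_mem (d.compl i)
      (d.one_mem _)).2 hr
    rw [h2] at h1
    exact h1
  · exact (List.isChain_map _).mpr n.toWord.chain_ne
  · have : n.prod = g := by
      rw [hn]
      exact Monoid.PushoutI.NormalWord.equiv.symm_apply_apply g
    rw [← this, NormalWord.prod, ofCoprodI_word_prod]

lemma P_unique (hφ : ∀ i, Function.Injective (φ i)) {g : PushoutI φ} {o o' : Option ι}
    (h1 : P φ g o) (h2 : P φ g o') : o = o' := by
  obtain ⟨h, L, hL, rfl, rfl⟩ := h1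
  obtain ⟨h', L', hL', heq, rfl⟩ := h2
  rw [headIdx_unique φ hφ hL hL' heq]

variable (hφ : ∀ i, Function.Injective (φ i))

/-- The index of the first letter of the normal form of `g`, or `none` if `g` is in the
base group. -/
noncomputable def F (g : PushoutI φ) : Option ι := (exists_P φ hφ g).choose

lemma F_spec (g : PushoutI φ) : P φ g (F φ hφ g) := (exists_P φ hφ g).choose_spec

lemma F_eq {g : PushoutI φ} {o : Option ι} (h : P φ g o) : F φ hφ g = o :=
  P_unique φ hφ (F_spec φ hφ g) h

lemma F_base_mul (h : H) (g : PushoutI φ) : F φ hφ (base φ h * g) = F φ hφ g := by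
  obtain ⟨h', L, hL, hg, hh⟩ := F_spec φ hφ g
  exact F_eq φ hφ ⟨h * h', L, hL, by rw [map_mul, mul_assoc, ← hg], hh⟩

lemma F_eq_none_iff (g : PushoutI φ) : F φ hφ g = none ↔ g ∈ (base φ).range := by
  constructor
  · intro h
    obtain ⟨h', L, hL, hg, hh⟩ := F_spec φ hφ g
    rw [h] at hh
    have : L = [] := by
      cases L with
      | nil => rfl
      | cons a L => simp at hh
    subst this
    simp only [prodL_nil, mul_one] at hg
    exact ⟨h', hg.symm⟩
  · rintro ⟨h, rfl⟩
    exact F_eq φ hφ ⟨h, [], ⟨by simp, List.isChain_nil⟩, by simp, rfl⟩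

end SchreierAux

namespace SchreierAux

variable {ι : Type*} {G : ι → Type*} {H : Type*} [Group H] [∀ i, Group (G i)]
  (φ : ∀ i, H →* G i)

lemma altRed_append_left {L₁ L₂ : List (Σ i, G i)} (h : AltRed φ (L₁ ++ L₂)) :
    AltRed φ L₁ :=
  ⟨fun p hp => h.1 p (List.mem_append_left _ hp),
    h.2.prefix ⟨L₂.map Sigma.fst, by simp⟩⟩

lemma altRed_replaceLast {L₀ : List (Σ i, G i)} {j : ι} {x y : G j}
    (hL : AltRed φ (L₀ ++ [⟨j, x⟩])) (hy : y ∉ (φ j).range) :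
    AltRed φ (L₀ ++ [⟨j, y⟩]) := by
  refine ⟨?_, ?_⟩
  · intro p hp
    rcases List.mem_append.mp hp with hp | hp
    · exact hL.1 p (List.mem_append_left _ hp)
    · rcases List.mem_singleton.mp hp with rfl
      exact hy
  · have : (L₀ ++ [Sigma.mk j y]).map Sigma.fst = (L₀ ++ [Sigma.mk j x]).map Sigma.fst := by simp
    rw [this]; exact hL.2

variable (hφ : ∀ i, Function.Injective (φ i))

lemma prodL_snoc (L : List (Σ i, G i)) (j : ι) (x : G j) :
    prodL φ (L ++ [Sigma.mk j x]) = prodL φ L * of (φ := φ) j x := by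
  simp [prodL]

lemma map_fst_snoc (L : List (Σ i, G i)) (j : ι) (x : G j) :
    (L ++ [Sigma.mk j x]).map Sigma.fst = L.map Sigma.fst ++ [j] := by simp

lemma head?_snoc {α : Type*} {A : List α} (hA : A ≠ []) (j : α) :
    (A ++ [j]).head? = A.head? := by
  cases A with
  | nil => exact absurd rfl hA
  | cons a l => simp

lemma F_mul_of (i : ι) (s : G i) {g : PushoutI φ}
    (hg : F φ hφ g ≠ none) (hgs : F φ hφ (g * of (φ := φ) i s) ≠ none) :
    F φ hφ (g * of (φ := φ) i s) = F φ hφ g := by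
  obtain ⟨h, L, hL, hgeq, hhead⟩ := F_spec φ hφ g
  have hLne : L ≠ [] := by
    rintro rfl
    exact hg (hhead.symm)
  rcases List.eq_nil_or_concat L with rfl | ⟨L₀, ⟨j, x⟩, rfl⟩
  · exact absurd rfl hLne
  rw [List.concat_eq_append] at *
  by_cases hs : s ∈ (φ i).range
  · obtain ⟨h', rfl⟩ := hs
    refine F_eq φ hφ ((⟨h, L₀ ++ [Sigma.mk j (x * φ j h')], ?_, ?_, ?_⟩ : P φ _ (F φ hφ g)))
    · exact altRed_replaceLast φ hL
        (fun hr => (hL.1 (Sigma.mk j x) (by simp)) ((mul_mem_cancel_right (⟨h', rfl⟩ : φ j h' ∈ (φ j).range)).mp hr))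
    · rw [hgeq, of_apply_eq_base φ i h', prodL_snoc, prodL_snoc, mul_assoc, mul_assoc,
        ← of_apply_eq_base φ j h', ← map_mul]
    · rw [← hhead, map_fst_snoc, map_fst_snoc]
  · by_cases hj : j = i
    · subst hj
      by_cases ht : x * s ∈ (φ j).range
      · obtain ⟨h', hh'⟩ := ht
        rcases List.eq_nil_or_concat L₀ with rfl | ⟨L₁, ⟨k, y⟩, rfl⟩
        · exfalso
          apply hgs
          rw [F_eq_none_iff]
          refine ⟨h * h', ?_⟩
          have hx : prodL φ ([] ++ [Sigma.mk j x]) = of (φ := φ) j x := by simp [prodL]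
          rw [hgeq, hx, mul_assoc, ← map_mul, ← hh', of_apply_eq_base, ← map_mul]
        · rw [List.concat_eq_append] at *
          refine F_eq φ hφ ((⟨h, L₁ ++ [Sigma.mk k (y * φ k h')], ?_, ?_, ?_⟩ : P φ _ (F φ hφ g)))
          · exact altRed_replaceLast φ (altRed_append_left φ hL)
              (fun hr => ((altRed_append_left φ hL).1 (Sigma.mk k y) (by simp))
                ((mul_mem_cancel_right (⟨h', rfl⟩ : φ k h' ∈ (φ k).range)).mp hr))
          · rw [hgeq, prodL_snoc, prodL_snoc, prodL_snoc, mul_assoc, mul_assoc, mul_assoc,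
              ← map_mul, ← hh', of_apply_eq_base φ j h', ← of_apply_eq_base φ k h', ← map_mul]
          · rw [← hhead, map_fst_snoc, map_fst_snoc, map_fst_snoc,
              head?_snoc (by simp : (L₁.map Sigma.fst ++ [k]) ≠ [])]
      · refine F_eq φ hφ ((⟨h, L₀ ++ [Sigma.mk j (x * s)], altRed_replaceLast φ hL ht, ?_, ?_⟩ : P φ _ (F φ hφ g)))
        · rw [hgeq, prodL_snoc, prodL_snoc, mul_assoc, mul_assoc, ← map_mul]
        · rw [← hhead, map_fst_snoc, map_fst_snoc]
    · refine F_eq φ hφ ((⟨h, (L₀ ++ [Sigma.mk j x]) ++ [Sigma.mk i s], ?_, ?_, ?_⟩ : P φ _ (F φ hφ g)))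
      · constructor
        · intro p hp
          rcases List.mem_append.mp hp with hp | hp
          · exact hL.1 p hp
          · rcases List.mem_singleton.mp hp with rfl
            exact hs
        · rw [map_fst_snoc, map_fst_snoc]
          refine List.isChain_append.mpr ⟨by rw [← map_fst_snoc]; exact hL.2,
            List.isChain_singleton _, ?_⟩
          intro a ha b hb
          rw [List.getLast?_concat] at ha
          simp only [Option.mem_def, Option.some.injEq, List.head?_cons] at ha hb
          subst ha; subst hb
          exact hj
      · conv_rhs => rw [prodL_snoc]
        rw [hgeq, mul_assoc]
      · rw [← hhead, map_fst_snoc,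
          head?_snoc (by simp [map_fst_snoc] : ((L₀ ++ [Sigma.mk j x]).map Sigma.fst) ≠ [])]

end SchreierAux

namespace SchreierAux

variable {ι : Type*} {G : ι → Type*} {H : Type*} [Group H] [∀ i, Group (G i)]
  (φ : ∀ i, H →* G i)

/-- The alternating list `[a, b, a, b, ...]` with `2n` letters. -/
def repL (i j : ι) (a : G i) (b : G j) : ℕ → List (Σ i, G i)
  | 0 => []
  | n+1 => ⟨i, a⟩ :: ⟨j, b⟩ :: repL i j a b n

lemma repL_spec (i j : ι) (hij : i ≠ j) (a : G i) (ha : a ∉ (φ i).range)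
    (b : G j) (hb : b ∉ (φ j).range) : ∀ n : ℕ,
    (∀ p ∈ repL i j a b n, p.2 ∉ (φ p.1).range) ∧
      List.Chain' (· ≠ ·) (j :: (repL i j a b n).map Sigma.fst) ∧
      prodL φ (repL i j a b n) = (of (φ := φ) i a * of (φ := φ) j b) ^ n ∧
      ((repL i j a b n).map Sigma.fst).head? = if n = 0 then none else some i := by
  intro n
  induction n with
  | zero => exact ⟨by simp [repL], by simp [repL, List.Chain'], by simp [repL], by simp [repL]⟩
  | succ n ih =>
    obtain ⟨h1, h2, h3, h4⟩ := ih
    refine ⟨?_, ?_, ?_, ?_⟩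
    · intro p hp
      simp only [repL, List.mem_cons] at hp
      rcases hp with rfl | rfl | hp
      · exact ha
      · exact hb
      · exact h1 p hp
    · exact List.IsChain.cons_cons hij.symm (List.IsChain.cons_cons hij h2)
    · show prodL φ (⟨i, a⟩ :: ⟨j, b⟩ :: repL i j a b n) = _
      rw [pow_succ']
      simp only [prodL, List.map_cons, List.prod_cons] at h3 ⊢
      rw [h3, mul_assoc]
    · simp [repL]

lemma altRed_repL (i j : ι) (hij : i ≠ j) (a : G i) (ha : a ∉ (φ i).range)
    (b : G j) (hb : b ∉ (φ j).range) (n : ℕ) : AltRed φ (repL i j a b n) :=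
  ⟨(repL_spec φ i j hij a ha b hb n).1, (repL_spec φ i j hij a ha b hb n).2.1.tail⟩

variable (hφ : ∀ i, Function.Injective (φ i))

lemma F_pow (i j : ι) (hij : i ≠ j) (a : G i) (ha : a ∉ (φ i).range)
    (b : G j) (hb : b ∉ (φ j).range) (n : ℕ) (hn : n ≠ 0) :
    F φ hφ ((of (φ := φ) i a * of (φ := φ) j b) ^ n) = some i := by
  obtain ⟨h1, h2, h3, h4⟩ := repL_spec φ i j hij a ha b hb n
  refine F_eq φ hφ ⟨1, repL i j a b n, altRed_repL φ i j hij a ha b hb n, ?_, ?_⟩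
  · rw [map_one, one_mul, h3]
  · rw [h4, if_neg hn]

end SchreierAux


open Monoid PushoutI in
/-- In an amalgamated free product `G₁ *_H G₂` with proper embeddings, for nontrivial coset
representatives `g₁, g₂`, the cosets `H(g₁g₂)ⁿ` and `H(g₂g₁)ⁿ` are distinct and lie in distinct
connected components of the Schreier graph of `H` after removing the vertex `H`. -/
theorem stmt_16 {H : Type*} {G : Bool → Type*} [Group H] [∀ i, Group (G i)]
    (φ : ∀ i, H →* G i) (hinj : ∀ i, Function.Injective (φ i))
    (hproper : ∀ i, ¬ Function.Surjective (φ i))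
    (S₁ : Finset (G true)) (hsym₁ : ∀ s ∈ S₁, s⁻¹ ∈ S₁)
    (hgen₁ : Subgroup.closure (S₁ : Set (G true)) = ⊤)
    (S₂ : Finset (G false)) (hsym₂ : ∀ s ∈ S₂, s⁻¹ ∈ S₂)
    (hgen₂ : Subgroup.closure (S₂ : Set (G false)) = ⊤)
    (g₁ : G true) (hg₁ : g₁ ∉ (φ true).range)
    (g₂ : G false) (hg₂ : g₂ ∉ (φ false).range)
    (n : ℕ) (hn : 1 ≤ n)
    (Hsub : Subgroup (PushoutI φ)) (hHsub : Hsub = (base φ).range)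
    (S : Set (PushoutI φ))
    (hS : S = (of (φ := φ) true) '' (S₁ : Set (G true)) ∪
      (of (φ := φ) false) '' (S₂ : Set (G false))) :
    Quotient.mk (QuotientGroup.rightRel Hsub)
        ((of (φ := φ) true g₁ * of (φ := φ) false g₂) ^ n) ≠
      Quotient.mk (QuotientGroup.rightRel Hsub)
        ((of (φ := φ) false g₂ * of (φ := φ) true g₁) ^ n) ∧
    Quotient.mk (QuotientGroup.rightRel Hsub)
        ((of (φ := φ) true g₁ * of (φ := φ) false g₂) ^ n) ≠
      Quotient.mk (QuotientGroup.rightRel Hsub) (1 : PushoutI φ) ∧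
    Quotient.mk (QuotientGroup.rightRel Hsub)
        ((of (φ := φ) false g₂ * of (φ := φ) true g₁) ^ n) ≠
      Quotient.mk (QuotientGroup.rightRel Hsub) (1 : PushoutI φ) ∧
    ∀ p : (schreierGraph Hsub S).Walk
        (Quotient.mk (QuotientGroup.rightRel Hsub)
          ((of (φ := φ) true g₁ * of (φ := φ) false g₂) ^ n))
        (Quotient.mk (QuotientGroup.rightRel Hsub)
          ((of (φ := φ) false g₂ * of (φ := φ) true g₁) ^ n)),
      Quotient.mk (QuotientGroup.rightRel Hsub) (1 : PushoutI φ) ∈ p.support := by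

  classical
  subst hHsub hS
  have hφ := hinj
  set x : PushoutI φ := (of (φ := φ) true g₁ * of (φ := φ) false g₂) ^ n with hx
  set y : PushoutI φ := (of (φ := φ) false g₂ * of (φ := φ) true g₁) ^ n with hy
  have hn0 : n ≠ 0 := by omega
  have Fx : SchreierAux.F φ hφ x = some true :=
    SchreierAux.F_pow φ hφ true false (by decide) g₁ hg₁ g₂ hg₂ n hn0
  have Fy : SchreierAux.F φ hφ y = some false :=
    SchreierAux.F_pow φ hφ false true (by decide) g₂ hg₂ g₁ hg₁ n hn0
  have F1 : SchreierAux.F φ hφ (1 : PushoutI φ) = none :=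
    (SchreierAux.F_eq_none_iff φ hφ 1).mpr ⟨1, by simp⟩
  have Finv : ∀ a b : PushoutI φ,
      Quotient.mk (QuotientGroup.rightRel (base φ).range) a =
        Quotient.mk (QuotientGroup.rightRel (base φ).range) b →
      SchreierAux.F φ hφ a = SchreierAux.F φ hφ b := by
    intro a b hab
    have h1 : b * a⁻¹ ∈ (base φ).range :=
      QuotientGroup.rightRel_apply.mp (Quotient.exact hab)
    obtain ⟨h, hh⟩ := h1
    have hb : b = base φ h * a := by rw [hh]; group
    rw [hb, SchreierAux.F_base_mul]
  have mk_one_iff : ∀ a : PushoutI φ,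
      Quotient.mk (QuotientGroup.rightRel (base φ).range) a =
        Quotient.mk (QuotientGroup.rightRel (base φ).range) (1 : PushoutI φ) ↔
      a ∈ (base φ).range := by
    intro a
    constructor
    · intro h
      have h1 : (1 : PushoutI φ) * a⁻¹ ∈ (base φ).range :=
        QuotientGroup.rightRel_apply.mp (Quotient.exact h)
      rw [one_mul, inv_mem_iff] at h1
      exact h1
    · intro h
      refine Quotient.sound (QuotientGroup.rightRel_apply.mpr ?_)
      rw [one_mul, inv_mem_iff]
      exact h
  set Fb : Quotient (QuotientGroup.rightRel ((base φ).range :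
      Subgroup (PushoutI φ))) → Option Bool :=
    fun q => SchreierAux.F φ hφ q.out with hFb
  have Fb_mk : ∀ a : PushoutI φ,
      Fb (Quotient.mk (QuotientGroup.rightRel (base φ).range) a) = SchreierAux.F φ hφ a := by
    intro a
    exact Finv _ _ (by rw [Quotient.out_eq])
  set S : Set (PushoutI φ) := (of (φ := φ) true) '' (S₁ : Set (G true)) ∪
      (of (φ := φ) false) '' (S₂ : Set (G false)) with hS
  have edge : ∀ u v, (schreierGraph (base φ).range S).Adj u v →
      u ≠ Quotient.mk (QuotientGroup.rightRel (base φ).range) (1 : PushoutI φ) →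
      v ≠ Quotient.mk (QuotientGroup.rightRel (base φ).range) (1 : PushoutI φ) →
      Fb u = Fb v := by
    intro u v hadj hu1 hv1
    obtain ⟨hne, s, hsS, g, hcase⟩ := hadj
    obtain ⟨i, s', rfl⟩ : ∃ (i : Bool) (s' : G i), s = of (φ := φ) i s' := by
      rcases hsS with ⟨s', _, rfl⟩ | ⟨s', _, rfl⟩
      · exact ⟨true, s', rfl⟩
      · exact ⟨false, s', rfl⟩
    have key : ∀ a b : Quotient (QuotientGroup.rightRel ((base φ).range :
        Subgroup (PushoutI φ))), ∀ g : PushoutI φ,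
        a ≠ Quotient.mk (QuotientGroup.rightRel (base φ).range) (1 : PushoutI φ) →
        b ≠ Quotient.mk (QuotientGroup.rightRel (base φ).range) (1 : PushoutI φ) →
        a = Quotient.mk (QuotientGroup.rightRel (base φ).range) g →
        b = Quotient.mk (QuotientGroup.rightRel (base φ).range) (g * of (φ := φ) i s') →
        Fb a = Fb b := by
      intro a b g ha1 hb1 hag hbg
      rw [hag, hbg, Fb_mk, Fb_mk]
      have hga : SchreierAux.F φ hφ g ≠ none := by
        intro hnone
        exact ha1 (hag ▸ (mk_one_iff g).mpr ((SchreierAux.F_eq_none_iff φ hφ g).mp hnone))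
      have hgb : SchreierAux.F φ hφ (g * of (φ := φ) i s') ≠ none := by
        intro hnone
        exact hb1 (hbg ▸ (mk_one_iff _).mpr ((SchreierAux.F_eq_none_iff φ hφ _).mp hnone))
      exact (SchreierAux.F_mul_of φ hφ i s' hga hgb).symm
    rcases hcase with ⟨hug, hvg⟩ | ⟨hvg, hug⟩
    · exact key u v g hu1 hv1 hug hvg
    · exact (key v u g hv1 hu1 hvg hug).symm
  have walkF : ∀ (u v : Quotient (QuotientGroup.rightRel ((base φ).range :
      Subgroup (PushoutI φ)))) (p : (schreierGraph (base φ).range S).Walk u v),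
      Quotient.mk (QuotientGroup.rightRel (base φ).range) (1 : PushoutI φ) ∉ p.support →
      Fb u = Fb v := by
    intro u v p
    induction p with
    | nil => intro _; rfl
    | @cons u w v hadj q ih =>
      intro hsup
      rw [SimpleGraph.Walk.support_cons, List.mem_cons] at hsup
      push_neg at hsup
      obtain ⟨hne1, hmem⟩ := hsup
      have hw1 : w ≠ Quotient.mk (QuotientGroup.rightRel (base φ).range) (1 : PushoutI φ) := by
        intro h
        exact hmem (h ▸ q.start_mem_support)
      exact (edge u w hadj (Ne.symm hne1) hw1).trans (ih hmem)
  refine ⟨?_, ?_, ?_, ?_⟩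
  · intro h
    have := Finv _ _ h
    rw [Fx, Fy] at this
    exact Bool.noConfusion (Option.some.inj this)
  · intro h
    have := Finv _ _ h
    rw [Fx, F1] at this
    exact nomatch this
  · intro h
    have := Finv _ _ h
    rw [Fy, F1] at this
    exact nomatch this
  · intro p
    by_contra hmem
    have := walkF _ _ p hmem
    rw [Fb_mk, Fb_mk, Fx, Fy] at this
    exact Bool.noConfusion (Option.some.inj this)
end
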